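/- arXiv:2109.08854 — 3 statements merged into one kernel-verified Lean document; each statement's English description precedes it below -/
import Mathlib

section
/- An FSA S is not strongly periodically detectable if and only if in its ε-extended self-composition CC^ε_A(S) at least one of the following holds: (9) there is a reachable state (x,x̄) with x≠x̄ such that there is a transition sequence x→^{s1}x'→^{s2}x' in S for some s1∈(T_uo)*, s2∈(T_uo)^+, x'∈X; (10) there is a reachable transition cycle (x1,x̄1)→^{s1'}⋯→^{sn'}(x_{n+1},x̄_{n+1}) for some positive integer n such that (x1,x̄1)=(x_{n+1},x̄_{n+1}), x_i≠x̄_i for all i∈{1,…,n}, and ℓ(s_i')∈Σ for all i∈{1,…,n}. -/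
/-- A finite-state automaton (FSA) `S = (X, T, X0, δ, Σ, ℓ)`:
states `X`, events `T`, outputs `O` (the alphabet Σ), initial states `init`,
transition relation `delta`, and labeling function `label` where `none` encodes ε. -/
structure FSA (X T O : Type) where
  init : Set X
  delta : X → T → X → Prop
  label : T → Option O

/-- Composed events of the (ε-extended) self-composition: pairs of observable
events with the same label, unobservable events on the left/right component,
and the added ε event. -/
inductive CEvent (T : Type) where
  | both : T → T → CEvent T
  | left : T → CEvent T
  | right : T → CEvent T
  | eps : CEvent T

namespace FSA

variable {X T O : Type}

/-- Extension of `delta` to finite event sequences: `x →^s x'`. -/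
def Run (M : FSA X T O) : X → List T → X → Prop
  | x, [], x' => x = x'
  | x, t :: s, x' => ∃ y, M.delta x t y ∧ Run M y s x'

/-- The label sequence `ℓ(s)` of a finite event sequence. -/
def labelSeq (M : FSA X T O) (s : List T) : List O :=
  s.filterMap M.label

/-- Membership in `L^ω(S)`: infinite event sequences generated from some initial state. -/
def InLomega (M : FSA X T O) (s : ℕ → T) : Prop :=
  ∃ x : ℕ → X, x 0 ∈ M.init ∧ ∀ i, M.delta (x i) (s i) (x (i + 1))

/-- `s'` is a finite prefix of the infinite sequence `s`. -/
def IsPrefixOf (s' : List T) (s : ℕ → T) : Prop :=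
  ∀ i : Fin s'.length, s'.get i = s i

/-- The current-state estimate `M(S,σ)`. -/
def est (M : FSA X T O) (σ : List O) : Set X :=
  {x | ∃ x0 ∈ M.init, ∃ s : List T, M.labelSeq s = σ ∧ M.Run x0 s x}

/-- Strong periodic detectability (SPD). -/
def SPD (M : FSA X T O) : Prop :=
  ∃ k : ℕ, 0 < k ∧ ∀ s : ℕ → T, M.InLomega s → ∀ s' : List T, IsPrefixOf s' s →
    ∃ s'' : List T, (M.labelSeq s'').length < k ∧ IsPrefixOf (s' ++ s'') s ∧
      (M.est (M.labelSeq (s' ++ s''))).ncard = 1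

/-- Strong periodic D-detectability with respect to `Tspec`. -/
def SPDD (M : FSA X T O) (Tspec : Set (X × X)) : Prop :=
  ∃ k : ℕ, 0 < k ∧ ∀ s : ℕ → T, M.InLomega s → ∀ s' : List T, IsPrefixOf s' s →
    ∃ s'' : List T, (M.labelSeq s'').length < k ∧ IsPrefixOf (s' ++ s'') s ∧
      (M.est (M.labelSeq (s' ++ s'')) ×ˢ M.est (M.labelSeq (s' ++ s''))) ∩ Tspec = ∅

/-- An unobservable transition sequence `x →^s x'` (all events labeled ε). -/
def UnobsRun (M : FSA X T O) (x : X) (s : List T) (x' : X) : Prop :=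
  M.Run x s x' ∧ ∀ t ∈ s, M.label t = none

/-- Unobservable reach `UR` of a set of states. -/
def UR (M : FSA X T O) (q : Set X) : Set X :=
  {x' | ∃ x ∈ q, ∃ s : List T, M.UnobsRun x s x'}

/-- Observable reach `Reach_σ` of a set of states. -/
def ReachO (M : FSA X T O) (σ : O) (q : Set X) : Set X :=
  {x' | ∃ x ∈ q, ∃ t : T, M.delta x t x' ∧ M.label t = some σ}

/-- Initial state `M(S,ε) = UR(X0)` of the observer/detector. -/
def obsInit (M : FSA X T O) : Set X := M.UR M.init

/-- Observer transition `δ_obs(q,σ) = UR(Reach_σ(q))` (defined when nonempty). -/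
def obsTrans (M : FSA X T O) (q : Set X) (σ : O) (q' : Set X) : Prop :=
  q' = M.UR (M.ReachO σ q) ∧ q'.Nonempty

/-- Sequences of observer transitions. -/
def ObsRun (M : FSA X T O) : Set X → List O → Set X → Prop
  | q, [], q' => q = q'
  | q, σ :: w, q' => ∃ q1, M.obsTrans q σ q1 ∧ ObsRun M q1 w q'

/-- Reachable states of the observer `S_obs`. -/
def ObsReachable (M : FSA X T O) (q : Set X) : Prop :=
  ∃ w : List O, M.ObsRun M.obsInit w q

/-- Detector transition relation `δ_det`. -/
def detTrans (M : FSA X T O) (q : Set X) (σ : O) (q' : Set X) : Prop :=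
  (1 < (M.UR (M.ReachO σ q)).ncard ∧ q' ⊆ M.UR (M.ReachO σ q) ∧ q'.ncard = 2) ∨
  ((M.UR (M.ReachO σ q)).ncard = 1 ∧ q' = M.UR (M.ReachO σ q))

/-- Sequences of detector transitions. -/
def DetRun (M : FSA X T O) : Set X → List O → Set X → Prop
  | q, [], q' => q = q'
  | q, σ :: w, q' => ∃ q1, M.detTrans q σ q1 ∧ DetRun M q1 w q'

/-- Reachable states of the detector `S_det`. -/
def DetReachable (M : FSA X T O) (q : Set X) : Prop :=
  ∃ w : List O, M.DetRun M.obsInit w q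

/-- The label of a composed event. -/
def cLabel (M : FSA X T O) : CEvent T → Option O
  | CEvent.both t _ => M.label t
  | CEvent.left _ => none
  | CEvent.right _ => none
  | CEvent.eps => none

/-- The label sequence of a sequence of composed events. -/
def ccLabelSeq (M : FSA X T O) (s : List (CEvent T)) : List O :=
  s.filterMap M.cLabel

/-- Transition relation `δ'` of the self-composition `CC_A(S)`. -/
def ccTrans (M : FSA X T O) : X × X → CEvent T → X × X → Prop
  | p, CEvent.both t t', p' =>
      M.delta p.1 t p'.1 ∧ M.delta p.2 t' p'.2 ∧
      ∃ σ : O, M.label t = some σ ∧ M.label t' = some σ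
  | p, CEvent.left t, p' => M.delta p.1 t p'.1 ∧ M.label t = none ∧ p.2 = p'.2
  | p, CEvent.right t, p' => p.1 = p'.1 ∧ M.label t = none ∧ M.delta p.2 t p'.2
  | _, CEvent.eps, _ => False

/-- Transition relation of the ε-extended self-composition `CC^ε_A(S)`:
all transitions of `CC_A(S)` plus, for `x1 ≠ x2`, the added ε-transitions
`((x1,x2),ε,(x1,x1))` and `((x1,x2),ε,(x2,x2))` under the stated conditions. -/
def ccEpsTrans (M : FSA X T O) (p : X × X) (e : CEvent T) (p' : X × X) : Prop :=
  M.ccTrans p e p' ∨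
  (e = CEvent.eps ∧ p.1 ≠ p.2 ∧ (p' = (p.1, p.1) ∨ p' = (p.2, p.2)) ∧
    ∃ (t' : CEvent T) (r : X × X),
      M.ccTrans p' t' r ∧ ∀ t'' : CEvent T, ¬ M.ccTrans p t'' r)

/-- Sequences of transitions of `CC^ε_A(S)`. -/
def CCRun (M : FSA X T O) : X × X → List (CEvent T) → X × X → Prop
  | p, [], p' => p = p'
  | p, e :: s, p' => ∃ r, M.ccEpsTrans p e r ∧ CCRun M r s p'

/-- Reachable states of `CC^ε_A(S)` (from `X0 × X0`). -/
def CCReachable (M : FSA X T O) (p : X × X) : Prop :=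
  ∃ p0 : X × X, p0.1 ∈ M.init ∧ p0.2 ∈ M.init ∧ ∃ s : List (CEvent T), M.CCRun p0 s p

/-- A state is reachable in `S`. -/
def StateReachable (M : FSA X T O) (x : X) : Prop :=
  ∃ x0 ∈ M.init, ∃ s : List T, M.Run x0 s x

/-- Deadlock-freeness. -/
def DeadlockFree (M : FSA X T O) : Prop :=
  ∀ x : X, M.StateReachable x → ∃ (t : T) (x' : X), M.delta x t x'

/-- Divergence-freeness (promptness): no reachable unobservable transition cycle. -/
def DivergenceFree (M : FSA X T O) : Prop :=
  ∀ x : X, M.StateReachable x → ∀ s : List T, s ≠ [] →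
    (∀ t ∈ s, M.label t = none) → ¬ M.Run x s x

end FSA
namespace FSA
variable {X T O : Type} {M : FSA X T O}

theorem run_append {x z : X} {u v : List T} :
    M.Run x (u ++ v) z ↔ ∃ y, M.Run x u y ∧ M.Run y v z := by
  induction u generalizing x with
  | nil => simp [Run]
  | cons t u ih =>
      constructor
      · rintro ⟨y, hy, hr⟩
        obtain ⟨w, h1, h2⟩ := (ih (x := y)).1 hr
        exact ⟨w, ⟨y, hy, h1⟩, h2⟩
      · rintro ⟨w, ⟨y, hy, h1⟩, h2⟩
        exact ⟨y, hy, (ih (x := y)).2 ⟨w, h1, h2⟩⟩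

theorem labelSeq_append {u v : List T} :
    M.labelSeq (u ++ v) = M.labelSeq u ++ M.labelSeq v :=
  List.filterMap_append

theorem labelSeq_eq_nil {u : List T} :
    M.labelSeq u = [] ↔ ∀ t ∈ u, M.label t = none := by
  simp [labelSeq, List.filterMap_eq_nil_iff]

theorem unobs_append {x y z : X} {u v : List T}
    (h1 : M.UnobsRun x u y) (h2 : M.UnobsRun y v z) : M.UnobsRun x (u ++ v) z := by
  refine ⟨run_append.2 ⟨y, h1.1, h2.1⟩, ?_⟩
  intro t ht
  rcases List.mem_append.1 ht with h | h
  · exact h1.2 t h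
  · exact h2.2 t h

theorem labelSeq_unobs {x y : X} {u : List T} (h : M.UnobsRun x u y) :
    M.labelSeq u = [] := labelSeq_eq_nil.2 h.2

theorem est_unobs_ext {σ : List O} {x y : X} {u : List T}
    (hx : x ∈ M.est σ) (h : M.UnobsRun x u y) : y ∈ M.est σ := by
  obtain ⟨x0, h0, s, hs, hr⟩ := hx
  exact ⟨x0, h0, s ++ u, by rw [labelSeq_append, labelSeq_unobs h, hs, List.append_nil],
    run_append.2 ⟨x, hr, h.1⟩⟩

theorem est_obs_ext {σ : List O} {x y : X} {t : T} {lam : O}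
    (hx : x ∈ M.est σ) (hd : M.delta x t y) (hl : M.label t = some lam) :
    y ∈ M.est (σ ++ [lam]) := by
  obtain ⟨x0, h0, s, hs, hr⟩ := hx
  refine ⟨x0, h0, s ++ [t], ?_, run_append.2 ⟨x, hr, ⟨y, hd, rfl⟩⟩⟩
  rw [labelSeq_append, hs]
  simp [labelSeq, hl]

theorem est_ncard_ne_one {σ : List O} [Fintype X] {x y : X}
    (hx : x ∈ M.est σ) (hy : y ∈ M.est σ) (hxy : x ≠ y) : (M.est σ).ncard ≠ 1 := by
  intro h
  obtain ⟨a, ha⟩ := Set.ncard_eq_one.1 h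
  rw [ha] at hx hy
  exact hxy (hx.trans hy.symm)

theorem est_partner {σ : List O} [Fintype X] {x : X}
    (hx : x ∈ M.est σ) (h : (M.est σ).ncard ≠ 1) : ∃ y ∈ M.est σ, y ≠ x := by
  by_contra hc
  push_neg at hc
  apply h
  rw [show M.est σ = {x} from Set.eq_singleton_iff_unique_mem.2 ⟨hx, hc⟩]
  simp

/-- Existence of a state function along a run. -/
theorem run_states {x z : X} {u : List T} (h : M.Run x u z) :
    ∃ f : ℕ → X, f 0 = x ∧ f u.length = z ∧
      ∀ i (hi : i < u.length), M.delta (f i) (u.get ⟨i, hi⟩) (f (i + 1)) := by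
  induction u generalizing x with
  | nil => exact ⟨fun _ => x, rfl, h ▸ rfl, by simp⟩
  | cons t u ih =>
      obtain ⟨y, hy, hr⟩ := h
      obtain ⟨f, hf0, hfl, hfs⟩ := ih hr
      refine ⟨fun n => Nat.rec x (fun m _ => f m) n, rfl, hfl, ?_⟩
      intro i hi
      cases i with
      | zero => simpa [hf0] using hy
      | succ j => exact hfs j (by simpa using hi)

theorem run_segments {x z : X} {u : List T} (h : M.Run x u z) :
    ∃ f : ℕ → X, f 0 = x ∧ f u.length = z ∧
      ∀ a b, a + b ≤ u.length → M.Run (f a) ((u.drop a).take b) (f (a + b)) := by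
  obtain ⟨f, hf0, hfl, hfs⟩ := run_states h
  refine ⟨f, hf0, hfl, ?_⟩
  intro a b
  induction b generalizing a with
  | zero => intro _; simp [Run]
  | succ c ihc =>
      intro hab
      have ha : a < u.length := by omega
      have he : (u.drop a).take (c + 1) = u[a] :: ((u.drop (a+1)).take c) := by
        rw [List.drop_eq_getElem_cons ha, List.take_succ_cons]
      rw [he]
      refine ⟨f (a + 1), hfs a ha, ?_⟩
      have := ihc (a + 1) (by omega)
      convert this using 2
      omega

theorem run_pigeonhole [Fintype X] {x z : X} {u : List T}
    (h : M.UnobsRun x u z) (hlen : Fintype.card X < u.length) :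
    ∃ (x' : X) (s1 s2 : List T), M.UnobsRun x s1 x' ∧ s2 ≠ [] ∧ M.UnobsRun x' s2 x' := by
  obtain ⟨f, hf0, hfl, hseg⟩ := run_segments h.1
  have main : ∀ a b : ℕ, a < b → b ≤ u.length → f a = f b →
      ∃ (x' : X) (s1 s2 : List T), M.UnobsRun x s1 x' ∧ s2 ≠ [] ∧ M.UnobsRun x' s2 x' := by
    intro a b hab hb hfab
    have h1 : M.Run x (u.take a) (f a) := by
      have := hseg 0 a (by omega)
      simpa [hf0] using this
    have h2 : M.Run (f a) ((u.drop a).take (b - a)) (f b) := by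
      have := hseg a (b - a) (by omega)
      convert this using 2
      omega
    refine ⟨f a, u.take a, (u.drop a).take (b - a),
      ⟨h1, fun t ht => h.2 t (List.take_subset _ _ ht)⟩, ?_,
      ⟨hfab ▸ h2, fun t ht => h.2 t (List.drop_subset _ _ (List.take_subset _ _ ht))⟩⟩
    have : ((u.drop a).take (b - a)).length = b - a := by
      simp [List.length_take, List.length_drop]
      omega
    intro hnil
    rw [hnil] at this
    simp at this
    omega
  obtain ⟨i, j, hne, hij⟩ := Fintype.exists_ne_map_eq_of_card_lt
    (fun n : Fin (Fintype.card X + 1) => f n) (by simp)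
  rcases Nat.lt_or_ge (i : ℕ) (j : ℕ) with hlt | hge
  · exact main i j hlt (by omega) hij
  · have : (j : ℕ) < i := by
      rcases Nat.lt_or_ge (j : ℕ) (i : ℕ) with h' | h'
      · exact h'
      · exact absurd (Fin.ext (by omega)) hne
    exact main j i this (by omega) hij.symm
/-- Decompose a run whose label ends with `lam` at the last observable event. -/
theorem run_label_snoc {x z : X} {u : List T} {W : List O} {lam : O}
    (h : M.Run x u z) (hl : M.labelSeq u = W ++ [lam]) :
    ∃ (u' v : List T) (y : X), u = u' ++ v ∧ M.Run x u' y ∧ M.Run y v z ∧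
      M.labelSeq u' = W ∧ M.labelSeq v = [lam] := by
  induction u generalizing x W with
  | nil => simp [labelSeq] at hl
  | cons t u ih =>
      obtain ⟨y, hy, hr⟩ := h
      rcases ho : M.label t with _ | mu
      · have hl' : M.labelSeq u = W ++ [lam] := by
          simpa [labelSeq, ho] using hl
        obtain ⟨u', v, w, he, h1, h2, h3, h4⟩ := ih hr hl'
        exact ⟨t :: u', v, w, by simp [he], ⟨y, hy, h1⟩, h2, by simp [labelSeq, ho]; exact h3, h4⟩
      · have hl' : mu :: M.labelSeq u = W ++ [lam] := by
          simpa [labelSeq, ho] using hl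
        cases W with
        | nil =>
            simp at hl'
            refine ⟨[], t :: u, x, rfl, rfl, ⟨y, hy, hr⟩, rfl, ?_⟩
            simp [labelSeq, ho, hl'.1, labelSeq_eq_nil.2]
            exact fun t' ht' => by
              have := (labelSeq_eq_nil (M := M) (u := u)).1 hl'.2
              exact this t' ht'
        | cons a W' =>
            simp at hl'
            obtain ⟨u', v, w, he, h1, h2, h3, h4⟩ := ih hr (by rw [hl'.2])
            refine ⟨t :: u', v, w, by simp [he], ⟨y, hy, h1⟩, h2, ?_, h4⟩
            simp [labelSeq, ho, hl'.1]
            exact h3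
/-- Decompose a run with a singleton label into unobs-part, observable event, unobs-part. -/
theorem run_label_single {y z : X} {v : List T} {lam : O}
    (h : M.Run y v z) (hl : M.labelSeq v = [lam]) :
    ∃ (v1 : List T) (t : T) (v2 : List T) (y1 y2 : X),
      M.UnobsRun y v1 y1 ∧ M.delta y1 t y2 ∧ M.label t = some lam ∧
      M.UnobsRun y2 v2 z := by
  induction v generalizing y with
  | nil => simp [labelSeq] at hl
  | cons t v ih =>
      obtain ⟨w, hw, hr⟩ := h
      rcases ho : M.label t with _ | mu
      · have hl' : M.labelSeq v = [lam] := by simpa [labelSeq, ho] using hl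
        obtain ⟨v1, t', v2, y1, y2, h1, h2, h3, h4⟩ := ih hr hl'
        exact ⟨t :: v1, t', v2, y1, y2,
          ⟨⟨w, hw, h1.1⟩, by
            intro a ha
            rcases List.mem_cons.1 ha with rfl | ha
            · exact ho
            · exact h1.2 a ha⟩, h2, h3, h4⟩
      · have hl' : mu = lam ∧ M.labelSeq v = [] := by
          have : mu :: M.labelSeq v = [lam] := by simpa [labelSeq, ho] using hl
          simpa using this
        exact ⟨[], t, v, y, w, ⟨rfl, by simp⟩, hw, by rw [ho, hl'.1],
          hr, labelSeq_eq_nil.1 hl'.2⟩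

/-- Backward decomposition of the estimate after one more observable label. -/
theorem est_obs_back [Fintype X] {σ : List O} {lam : O} {z : X}
    (hz : z ∈ M.est (σ ++ [lam])) :
    ∃ (c : X) (t : T) (y2 : X) (v2 : List T),
      c ∈ M.est σ ∧ M.delta c t y2 ∧ M.label t = some lam ∧ M.UnobsRun y2 v2 z := by
  obtain ⟨x0, h0, u, hu, hr⟩ := hz
  obtain ⟨u', v, y, he, h1, h2, h3, h4⟩ := run_label_snoc hr hu
  obtain ⟨v1, t, v2, y1, y2, g1, g2, g3, g4⟩ := run_label_single h2 h4
  refine ⟨y1, t, y2, v2, ?_, g2, g3, g4⟩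
  exact est_unobs_ext ⟨x0, h0, u', h3, h1⟩ g1
theorem ccrun_append {p q r : X × X} {u v : List (CEvent T)}
    (h1 : M.CCRun p u q) (h2 : M.CCRun q v r) : M.CCRun p (u ++ v) r := by
  induction u generalizing p with
  | nil => rwa [show p = q from h1]
  | cons e u ih =>
      obtain ⟨m, hm, hr⟩ := h1
      exact ⟨m, hm, ih hr⟩

theorem ccLabelSeq_append {u v : List (CEvent T)} :
    M.ccLabelSeq (u ++ v) = M.ccLabelSeq u ++ M.ccLabelSeq v :=
  List.filterMap_append

/-- The estimate invariant along runs of `CC^ε_A(S)`. -/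
theorem cc_invariant {p q : X × X} {w : List (CEvent T)} {σ : List O}
    (h1 : p.1 ∈ M.est σ) (h2 : p.2 ∈ M.est σ) (hr : M.CCRun p w q) :
    q.1 ∈ M.est (σ ++ M.ccLabelSeq w) ∧ q.2 ∈ M.est (σ ++ M.ccLabelSeq w) := by
  induction w generalizing p σ with
  | nil =>
      rw [show p = q from hr] at h1 h2
      simpa [ccLabelSeq] using ⟨h1, h2⟩
  | cons e w ih =>
      obtain ⟨m, hm, hr'⟩ := hr
      rcases hm with hm | ⟨rfl, hne, hor, _⟩
      · cases e with
        | both t t' =>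
            obtain ⟨d1, d2, mu, l1, l2⟩ := hm
            have g1 : m.1 ∈ M.est (σ ++ [mu]) := est_obs_ext h1 d1 l1
            have g2 : m.2 ∈ M.est (σ ++ [mu]) := est_obs_ext h2 d2 l2
            have := ih g1 g2 hr'
            simpa [ccLabelSeq, cLabel, l1, List.append_assoc] using this
        | left t =>
            obtain ⟨d1, l1, e2⟩ := hm
            have g1 : m.1 ∈ M.est σ := est_unobs_ext h1 (show M.UnobsRun p.1 [t] m.1 from ⟨⟨m.1, d1, rfl⟩, by simp [l1]⟩)
            have g2 : m.2 ∈ M.est σ := e2 ▸ h2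
            have := ih g1 g2 hr'
            simpa [ccLabelSeq, cLabel, l1, List.filterMap_cons] using this
        | right t =>
            obtain ⟨e1, l1, d2⟩ := hm
            have g1 : m.1 ∈ M.est σ := e1 ▸ h1
            have g2 : m.2 ∈ M.est σ := est_unobs_ext h2 (show M.UnobsRun p.2 [t] m.2 from ⟨⟨m.2, d2, rfl⟩, by simp [l1]⟩)
            have := ih g1 g2 hr'
            simpa [ccLabelSeq, cLabel, l1, List.filterMap_cons] using this
        | eps => exact absurd hm (by simp [ccTrans])
      · have g : m.1 ∈ M.est σ ∧ m.2 ∈ M.est σ := by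
          rcases hor with rfl | rfl
          · exact ⟨h1, h1⟩
          · exact ⟨h2, h2⟩
        have := ih g.1 g.2 hr'
        simpa [ccLabelSeq, cLabel, List.filterMap_cons] using this

/-- Interleaving: two runs with the same label sequence yield a `CC_A` run. -/
theorem cc_interleave {x y x' y' : X} {u v : List T}
    (hu : M.Run x u x') (hv : M.Run y v y') (hl : M.labelSeq u = M.labelSeq v) :
    ∃ w : List (CEvent T), M.CCRun (x, y) w (x', y') := by
  have H : ∀ n (u v : List T) (x y x' y' : X), u.length + v.length ≤ n →
      M.Run x u x' → M.Run y v y' → M.labelSeq u = M.labelSeq v →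
      ∃ w : List (CEvent T), M.CCRun (x, y) w (x', y') := by
    intro n
    induction n with
    | zero =>
        intro u v x y x' y' hn hu hv _
        have : u = [] ∧ v = [] := by
          constructor <;> (apply List.length_eq_zero_iff.1; omega)
        obtain ⟨rfl, rfl⟩ := this
        exact ⟨[], by rw [show x = x' from hu, show y = y' from hv]; rfl⟩
    | succ n ih =>
        intro u v x y x' y' hn hu hv hl
        cases u with
        | nil =>
            cases v with
            | nil => exact ⟨[], by rw [show x = x' from hu, show y = y' from hv]; rfl⟩
            | cons t v' =>
                obtain ⟨m, hm, hr⟩ := hv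
                have ht : M.label t = none := by
                  rcases ho : M.label t with _ | mu
                  · rfl
                  · exfalso
                    have : ([] : List O) = mu :: M.labelSeq v' := by
                      simpa [labelSeq, ho] using hl
                    simp at this
                obtain ⟨w, hw⟩ := ih [] v' x m x' y' (by simp at hn ⊢; omega) hu hr
                  (by simpa [labelSeq, ht] using hl)
                exact ⟨CEvent.right t :: w, ⟨(x, m), Or.inl ⟨rfl, ht, hm⟩, hw⟩⟩
        | cons t u' =>
            obtain ⟨m, hm, hr⟩ := hu
            rcases ho : M.label t with _ | mu
            · obtain ⟨w, hw⟩ := ih u' v m y x' y' (by simp at hn ⊢; omega) hr hv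
                (by simpa [labelSeq, ho] using hl)
              exact ⟨CEvent.left t :: w, ⟨(m, y), Or.inl ⟨hm, ho, rfl⟩, hw⟩⟩
            · -- head of u is observable; scan v
              cases v with
              | nil =>
                  exfalso
                  have : mu :: M.labelSeq u' = ([] : List O) := by
                    simpa [labelSeq, ho] using hl
                  simp at this
              | cons t2 v' =>
                  obtain ⟨m2, hm2, hr2⟩ := hv
                  rcases ho2 : M.label t2 with _ | mu2
                  · obtain ⟨w, hw⟩ := ih (t :: u') v' x m2 x' y'
                      (by simp at hn ⊢; omega) ⟨m, hm, hr⟩ hr2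
                      (by simpa [labelSeq, ho2] using hl)
                    exact ⟨CEvent.right t2 :: w, ⟨(x, m2), Or.inl ⟨rfl, ho2, hm2⟩, hw⟩⟩
                  · have heq : mu = mu2 ∧ M.labelSeq u' = M.labelSeq v' := by
                      have : mu :: M.labelSeq u' = mu2 :: M.labelSeq v' := by
                        simpa [labelSeq, ho, ho2] using hl
                      simpa using this
                    obtain ⟨w, hw⟩ := ih u' v' m m2 x' y' (by simp at hn ⊢; omega)
                      hr hr2 heq.2
                    exact ⟨CEvent.both t t2 :: w,
                      ⟨(m, m2), Or.inl ⟨hm, hm2, mu, ho, heq.1 ▸ ho2⟩, hw⟩⟩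
  exact H (u.length + v.length) u v x y x' y' le_rfl hu hv hl

/-- Two states in the same estimate give a reachable state of `CC^ε_A(S)`. -/
theorem ccreach_of_est {σ : List O} {x y : X}
    (hx : x ∈ M.est σ) (hy : y ∈ M.est σ) : M.CCReachable (x, y) := by
  obtain ⟨x0, h0, u, hu, hru⟩ := hx
  obtain ⟨y0, h0', v, hv, hrv⟩ := hy
  obtain ⟨w, hw⟩ := cc_interleave hru hrv (hu.trans hv.symm)
  exact ⟨(x0, y0), h0, h0', w, hw⟩

theorem ccreach_run {p q : X × X} {w : List (CEvent T)}
    (h : M.CCReachable p) (hr : M.CCRun p w q) : M.CCReachable q := by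
  obtain ⟨p0, h1, h2, u, hu⟩ := h
  exact ⟨p0, h1, h2, u ++ w, ccrun_append hu hr⟩

theorem ccreach_est {p : X × X} (h : M.CCReachable p) :
    ∃ σ : List O, p.1 ∈ M.est σ ∧ p.2 ∈ M.est σ := by
  obtain ⟨p0, h1, h2, u, hu⟩ := h
  have e1 : p0.1 ∈ M.est [] := ⟨p0.1, h1, [], rfl, rfl⟩
  have e2 : p0.2 ∈ M.est [] := ⟨p0.2, h2, [], rfl, rfl⟩
  obtain ⟨g1, g2⟩ := cc_invariant e1 e2 hu
  exact ⟨M.ccLabelSeq u, by simpa using g1, by simpa using g2⟩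
theorem inf_run_slice {s : ℕ → T} {xs : ℕ → X}
    (hd : ∀ i, M.delta (xs i) (s i) (xs (i + 1))) :
    ∀ n a, M.Run (xs a) ((List.range' a n).map s) (xs (a + n)) := by
  intro n
  induction n with
  | zero => intro a; simp [Run]
  | succ n ih =>
      intro a
      rw [List.range'_succ]
      exact ⟨xs (a + 1), hd a, by
        have := ih (a + 1)
        convert this using 2
        omega⟩

/-- Build an eventually periodic infinite run from a lasso. -/
theorem lasso_run {x0 x' : X} {L c : List T}
    (hL : M.Run x0 L x') (hc : M.Run x' c x') (hne : c ≠ []) :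
    ∃ (s : ℕ → T) (xs : ℕ → X), xs 0 = x0 ∧ (∀ i, M.delta (xs i) (s i) (xs (i + 1))) ∧
      (∀ i (hi : i < L.length), s i = L.get ⟨i, hi⟩) ∧
      (∀ m, ∃ (hm : m % c.length < c.length), s (L.length + m) = c.get ⟨m % c.length, hm⟩) := by
  have hcl : 0 < c.length := List.length_pos_iff.2 hne
  obtain ⟨f, hf0, hfL, hfs⟩ := run_states hL
  obtain ⟨g, hg0, hgc, hgs⟩ := run_states hc
  refine ⟨fun i => if h : i < L.length then L.get ⟨i, h⟩
      else c.get ⟨(i - L.length) % c.length, Nat.mod_lt _ hcl⟩,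
    fun i => if i < L.length then f i else g ((i - L.length) % c.length),
    ?_, ?_, ?_, ?_⟩
  · beta_reduce
    by_cases h0 : 0 < L.length
    · simp only [if_pos h0]; exact hf0
    · have hL0 : L.length = 0 := by omega
      simp only [if_neg h0, Nat.zero_sub, Nat.zero_mod, hg0]
      rw [← hfL, hL0, hf0]
  · intro i
    beta_reduce
    by_cases h1 : i < L.length
    · rw [dif_pos h1, if_pos h1]
      by_cases h2 : i + 1 < L.length
      · rw [if_pos h2]; exact hfs i h1
      · have h2' : i + 1 = L.length := by omega
        rw [if_neg h2, h2']
        simp only [Nat.sub_self, Nat.zero_mod, hg0, ← hfL, ← h2']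
        exact hfs i h1
    · have h2 : ¬ (i + 1 < L.length) := by omega
      rw [dif_neg h1, if_neg h1, if_neg h2]
      have e3 : i + 1 - L.length = (i - L.length) + 1 := by omega
      rw [e3]
      set m := i - L.length with hm
      set j := m % c.length with hj
      have hjlt : j < c.length := Nat.mod_lt _ hcl
      have hd := hgs j hjlt
      by_cases h3 : j + 1 < c.length
      · have hcl2 : 1 < c.length := by omega
        have : (m + 1) % c.length = j + 1 := by
          rw [Nat.add_mod, Nat.mod_eq_of_lt hcl2, ← hj, Nat.mod_eq_of_lt h3]
        rw [this]; exact hd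
      · have h3' : j + 1 = c.length := by omega
        have h0 : (m + 1) % c.length = 0 := by
          rcases Nat.lt_or_ge 1 c.length with hc2 | hc2
          · rw [Nat.add_mod, Nat.mod_eq_of_lt hc2, ← hj, h3', Nat.mod_self]
          · have : c.length = 1 := by omega
            simp [this, Nat.mod_one]
        have e : g ((m + 1) % c.length) = g (j + 1) := by
          rw [h0, h3', hg0, hgc]
        rw [e]; exact hd
  · intro i hi
    beta_reduce
    rw [dif_pos hi]
  · intro m
    refine ⟨Nat.mod_lt _ hcl, ?_⟩
    have h : ¬ (L.length + m < L.length) := by omega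
    beta_reduce
    rw [dif_neg h]
    simp
theorem isPrefixOf_map_range {s : ℕ → T} (n : ℕ) :
    IsPrefixOf ((List.range n).map s) s := by
  intro i
  simp

theorem isPrefixOf_eq {v : List T} {s : ℕ → T} (h : IsPrefixOf v s) :
    v = (List.range v.length).map s := by
  apply List.ext_getElem (by simp)
  intro i h1 h2
  have := h ⟨i, h1⟩
  simpa using this

theorem prefix_append_get {L v : List T} {s : ℕ → T} (h : IsPrefixOf (L ++ v) s) :
    ∀ i (hi : i < v.length), v.get ⟨i, hi⟩ = s (L.length + i) := by
  intro i hi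
  have hlt : L.length + i < (L ++ v).length := by simp; omega
  have h1 := h ⟨L.length + i, hlt⟩
  rw [← h1]
  simp only [List.get_eq_getElem]
  rw [List.getElem_append_right (by omega)]
  congr 1
  omega

/-- Condition (9) implies not SPD. -/
theorem rhs9_not_spd [Fintype X]
    (h : ∃ p : X × X, M.CCReachable p ∧ p.1 ≠ p.2 ∧
      ∃ (x' : X) (s1 s2 : List T), M.UnobsRun p.1 s1 x' ∧ s2 ≠ [] ∧ M.UnobsRun x' s2 x') :
    ¬ M.SPD := by
  rintro ⟨k, hk, H⟩
  obtain ⟨p, hreach, hne, x', s1, s2, h1, hs2, h2⟩ := h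
  obtain ⟨σ, e1, e2⟩ := ccreach_est hreach
  obtain ⟨x0, h0, u, hu, hru⟩ := e1
  have hLrun : M.Run x0 (u ++ s1) x' := run_append.2 ⟨p.1, hru, h1.1⟩
  obtain ⟨s, xs, hxs0, hdelta, hpre, htail⟩ := lasso_run hLrun h2.1 hs2
  have hinf : M.InLomega s := ⟨xs, by rw [hxs0]; exact h0, hdelta⟩
  obtain ⟨s'', hlen, hpref, hcard⟩ := H s hinf (u ++ s1) (fun i => (hpre i i.2).symm)
  have hL : M.labelSeq (u ++ s1) = σ := by
    rw [labelSeq_append, hu, labelSeq_unobs h1]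
    simp
  have hunobs : ∀ t ∈ s'', M.label t = none := by
    intro t ht
    obtain ⟨⟨i, hi2⟩, hi⟩ := List.get_of_mem ht
    have hg := prefix_append_get hpref i hi2
    obtain ⟨hm, he⟩ := htail i
    rw [← hi, hg, he]
    exact h2.2 _ (List.get_mem _ _)
  have hfin : M.labelSeq ((u ++ s1) ++ s'') = σ := by
    rw [labelSeq_append, hL, labelSeq_eq_nil.2 hunobs]
    simp
  rw [hfin] at hcard
  exact est_ncard_ne_one (⟨x0, h0, u, hu, hru⟩ : p.1 ∈ M.est σ) e2 hne hcard
theorem run_split_labels {σ0 : List O} {Lam : ℕ → O} :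
    ∀ (m : ℕ) (x0 z : X) (u : List T), M.Run x0 u z →
      M.labelSeq u = σ0 ++ (List.range m).map Lam →
      ∃ (g : ℕ → X) (cs : ℕ → List T) (u0 : List T),
        M.Run x0 u0 (g 0) ∧ M.labelSeq u0 = σ0 ∧ g m = z ∧
        ∀ j, j < m → M.Run (g j) (cs j) (g (j + 1)) ∧ M.labelSeq (cs j) = [Lam j] := by
  intro m
  induction m with
  | zero =>
      intro x0 z u h hl
      exact ⟨fun _ => z, fun _ => [], u, h, by simpa using hl, rfl, by omega⟩
  | succ m ih =>
      intro x0 z u h hl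
      have hl' : M.labelSeq u = (σ0 ++ (List.range m).map Lam) ++ [Lam m] := by
        rw [hl, List.range_succ]
        simp
      obtain ⟨u', v, y, _, h1, h2, h3, h4⟩ := run_label_snoc h hl'
      obtain ⟨g, cs, u0, g1, g2, g3, g4⟩ := ih x0 y u' h1 h3
      refine ⟨fun j => if j = m + 1 then z else g j, fun j => if j = m then v else cs j,
        u0, ?_, g2, by simp, ?_⟩
      · simpa using g1
      · intro j hj
        rcases Nat.lt_or_ge j m with hjm | hjm
        · have e1 : j ≠ m + 1 := by omega
          have e2 : j + 1 ≠ m + 1 := by omega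
          have e3 : j ≠ m := by omega
          simpa [e1, e2, e3] using g4 j hjm
        · have hjm' : j = m := by omega
          subst hjm'
          have e1 : j ≠ j + 1 := by omega
          simp only [if_pos rfl, if_neg e1]
          exact ⟨g3 ▸ h2, h4⟩

theorem seg_comp {g : ℕ → X} {cs : ℕ → List T} {Lam : ℕ → O} {mtot : ℕ}
    (H : ∀ j, j < mtot → M.Run (g j) (cs j) (g (j + 1)) ∧ M.labelSeq (cs j) = [Lam j]) :
    ∀ b a, a + b ≤ mtot →
      M.Run (g a) (((List.range' a b).map cs).flatten) (g (a + b)) ∧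
      M.labelSeq (((List.range' a b).map cs).flatten) = (List.range' a b).map Lam := by
  intro b
  induction b with
  | zero => intro a _; simp [Run, labelSeq]
  | succ b ih =>
      intro a hab
      obtain ⟨r1, r2⟩ := ih (a + 1) (by omega)
      rw [List.range'_succ]
      simp only [List.map_cons, List.flatten_cons]
      obtain ⟨q1, q2⟩ := H a (by omega)
      constructor
      · refine run_append.2 ⟨g (a + 1), q1, ?_⟩
        convert r1 using 2
        omega
      · rw [labelSeq_append, q2, r2]
        simp

theorem take_map_range' {f : ℕ → O} {a r L : ℕ} (h : r ≤ L) :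
    ((List.range' a L).map f).take r = (List.range' a r).map f := by
  apply List.ext_getElem (by simp; omega)
  intro i h1 h2
  simp

theorem periodic_label {cyc : List T} (hcl : 0 < cyc.length) {f : ℕ → O} {a0 dn : ℕ}
    (hper : ∀ x, f (x + dn) = f x)
    (W : M.labelSeq cyc = (List.range' a0 dn).map f) :
    ∀ (len : ℕ) (v : List T), v.length ≤ len →
      (∀ i (hi : i < v.length), v.get ⟨i, hi⟩ = cyc.get ⟨i % cyc.length, Nat.mod_lt _ hcl⟩) →
      ∃ r, M.labelSeq v = (List.range' a0 r).map f := by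
  have hshift : ∀ L, (List.range' (a0 + dn) L).map f = (List.range' a0 L).map f := by
    intro L
    apply List.ext_getElem (by simp)
    intro i h1 h2
    simp only [List.getElem_map, List.getElem_range']
    convert hper (a0 + i) using 2 <;> omega
  intro len
  induction len with
  | zero =>
      intro v hv _
      have : v = [] := List.length_eq_zero_iff.1 (by omega)
      exact ⟨0, by simp [this, labelSeq]⟩
  | succ len ih =>
      intro v hv hgets
      rcases Nat.lt_or_ge cyc.length v.length with hlong | hshort
      · -- peel one full cycle
        have htake : v.take cyc.length = cyc := by
          apply List.ext_getElem (by simp; omega)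
          intro i h1 h2
          have h3 : i < v.length := by simp at h1; omega
          have := hgets i h3
          simp only [List.get_eq_getElem] at this
          rw [List.getElem_take]
          rw [this]
          congr 1
          exact Nat.mod_eq_of_lt (by simp at h1; omega)
        have hdropgets : ∀ i (hi : i < (v.drop cyc.length).length),
            (v.drop cyc.length).get ⟨i, hi⟩ = cyc.get ⟨i % cyc.length, Nat.mod_lt _ hcl⟩ := by
          intro i hi
          have hi' : cyc.length + i < v.length := by simp at hi; omega
          have e : (v.drop cyc.length).get ⟨i, hi⟩ = v.get ⟨cyc.length + i, hi'⟩ := by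
            simp only [List.get_eq_getElem]
            rw [List.getElem_drop]
          rw [e, hgets _ hi']
          congr 2
          exact Nat.add_mod_left _ _
        obtain ⟨r', hr'⟩ := ih (v.drop cyc.length) (by simp; omega) hdropgets
        refine ⟨r' + dn, ?_⟩
        have hv2 : v = v.take cyc.length ++ v.drop cyc.length := by simp
        rw [hv2, labelSeq_append, htake, W, hr']
        rw [← hshift r']
        rw [← List.map_append]
        congr 1
        exact (List.range'_append_1 (s := a0) (m := dn) (n := r')).trans (by rw [Nat.add_comm])
      · -- v is a prefix of one period
        have htake : v = cyc.take v.length := by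
          apply List.ext_getElem (by simp; omega)
          intro i h1 h2
          have := hgets i h1
          simp only [List.get_eq_getElem] at this
          rw [this, List.getElem_take]
          congr 1
          exact Nat.mod_eq_of_lt (by omega)
        have hsplit : M.labelSeq cyc = M.labelSeq v ++ M.labelSeq (cyc.drop v.length) := by
          conv_lhs => rw [show cyc = cyc.take v.length ++ cyc.drop v.length by simp, ← htake]
          exact labelSeq_append
        have hlen : (M.labelSeq v).length ≤ dn := by
          have : (M.labelSeq cyc).length = dn := by rw [W]; simp
          rw [hsplit] at this
          simp at this
          omega
        refine ⟨(M.labelSeq v).length, ?_⟩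
        have : M.labelSeq v = ((List.range' a0 dn).map f).take (M.labelSeq v).length := by
          rw [← W, hsplit]
          simp
        rw [take_map_range' hlen] at this
        exact this
theorem mod_succ_cases (m : ℕ) {n : ℕ} (hn : 0 < n) :
    ((m + 1) % n = m % n + 1 ∧ m % n + 1 < n) ∨ ((m + 1) % n = 0 ∧ m % n + 1 = n) := by
  rcases Nat.lt_or_ge (m % n + 1) n with h | h
  · left
    refine ⟨?_, h⟩
    have hn2 : 1 < n := by omega
    rw [Nat.add_mod, Nat.mod_eq_of_lt hn2, Nat.mod_eq_of_lt h]
  · right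
    have h' : m % n + 1 = n := by
      have := Nat.mod_lt m hn
      omega
    refine ⟨?_, h'⟩
    rcases Nat.lt_or_ge 1 n with h2 | h2
    · rw [Nat.add_mod, Nat.mod_eq_of_lt h2, h', Nat.mod_self]
    · have : n = 1 := by omega
      simp [this, Nat.mod_one]

/-- Condition (10) implies not SPD. -/
theorem rhs10_not_spd [Fintype X]
    (h : ∃ n : ℕ, 0 < n ∧
      ∃ (p : Fin (n + 1) → X × X) (sg : Fin n → List (CEvent T)),
        M.CCReachable (p 0) ∧ p 0 = p (Fin.last n) ∧
        (∀ i : Fin n, M.CCRun (p i.castSucc) (sg i) (p i.succ)) ∧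
        (∀ i : Fin n, (p i.castSucc).1 ≠ (p i.castSucc).2) ∧
        (∀ i : Fin n, ∃ σ : O, M.ccLabelSeq (sg i) = [σ])) : ¬ M.SPD := by
  classical
  rintro ⟨k, hk, H⟩
  obtain ⟨n, hn, p, sg, hreach, hwrap, hrun, hdist, hlab⟩ := h
  choose lab hlabeq using hlab
  obtain ⟨σ0, e01, e02⟩ := ccreach_est hreach
  set Lam : ℕ → O := fun m => lab ⟨m % n, Nat.mod_lt _ hn⟩ with hLam
  set ρ : ℕ → List O := fun m => σ0 ++ (List.range m).map Lam with hρ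
  have key : ∀ m : ℕ, (p (Fin.castSucc ⟨m % n, Nat.mod_lt _ hn⟩)).1 ∈ M.est (ρ m) ∧
      (p (Fin.castSucc ⟨m % n, Nat.mod_lt _ hn⟩)).2 ∈ M.est (ρ m) := by
    intro m
    induction m with
    | zero =>
        have h0 : (Fin.castSucc (⟨0 % n, Nat.mod_lt _ hn⟩ : Fin n)) = (0 : Fin (n+1)) := by
          apply Fin.ext
          simp
        rw [h0]
        constructor
        · simpa [hρ] using e01
        · simpa [hρ] using e02
    | succ m ih =>
        have hrun_i := hrun ⟨m % n, Nat.mod_lt _ hn⟩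
        have hinv := cc_invariant ih.1 ih.2 hrun_i
        rw [hlabeq ⟨m % n, Nat.mod_lt _ hn⟩] at hinv
        have hρs : ρ (m + 1) = ρ m ++ [lab ⟨m % n, Nat.mod_lt _ hn⟩] := by
          simp only [hρ, List.range_succ, List.map_append, List.map_cons, List.map_nil]
          simp [hLam, List.append_assoc]
        have hnext : p (Fin.succ ⟨m % n, Nat.mod_lt _ hn⟩)
            = p (Fin.castSucc ⟨(m + 1) % n, Nat.mod_lt _ hn⟩) := by
          rcases mod_succ_cases m hn with ⟨h1, h2⟩ | ⟨h1, h2⟩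
          · congr 1
            apply Fin.ext
            simp [h1]
          · have e1 : Fin.succ (⟨m % n, Nat.mod_lt _ hn⟩ : Fin n) = Fin.last n := by
              apply Fin.ext
              simp [h2]
            have e2 : (Fin.castSucc (⟨(m + 1) % n, Nat.mod_lt _ hn⟩ : Fin n))
                = (0 : Fin (n+1)) := by
              apply Fin.ext
              simp [h1]
            rw [e1, ← hwrap, e2]
        rw [hρs, ← hnext]
        exact hinv
  have key2 : ∀ m : ℕ, (M.est (ρ m)).ncard ≠ 1 := by
    intro m
    exact est_ncard_ne_one (key m).1 (key m).2 (hdist _)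
  -- extract a lasso in S
  set mBig := n * (Fintype.card X + 1) with hmBig
  obtain ⟨x0, h0, u, hu, hru⟩ := (key mBig).1
  obtain ⟨g, cs, u0, g1, g2, g3, g4⟩ := run_split_labels mBig x0 _ u hru (by rw [hu, hρ])
  have main : ∀ a0 dn : ℕ, 0 < dn → a0 + dn ≤ mBig → (∀ x, Lam (x + dn) = Lam x) →
      g a0 = g (a0 + dn) → False := by
    intro a0 dn hdnpos hbound hper heq
    have hseg := seg_comp (M := M) g4
    obtain ⟨hstem_run, hstem_lab⟩ := hseg a0 0 (by omega)
    obtain ⟨hcyc_run, hcyc_lab⟩ := hseg dn a0 (by omega)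
    set stem := u0 ++ ((List.range' 0 a0).map cs).flatten with hstem
    set cyc := ((List.range' a0 dn).map cs).flatten with hcyc
    have hstemrun : M.Run x0 stem (g a0) := by
      refine run_append.2 ⟨g 0, g1, ?_⟩
      simpa using hstem_run
    have hstemlab : M.labelSeq stem = ρ a0 := by
      rw [hstem, labelSeq_append, g2, hstem_lab, hρ]
      simp [List.range_eq_range']
    have hcycrun : M.Run (g a0) cyc (g a0) := by
      rw [← heq] at hcyc_run
      exact hcyc_run
    have hcycne : cyc ≠ [] := by
      intro hnil
      have h1 : M.labelSeq cyc = [] := by rw [hnil]; rfl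
      rw [hcyc_lab] at h1
      have h2 := congrArg List.length h1
      simp at h2
      omega
    have hclpos : 0 < cyc.length := List.length_pos_iff.2 hcycne
    obtain ⟨S, xs, hxs0, hdelta, hpre, htail⟩ := lasso_run hstemrun hcycrun hcycne
    have hinf : M.InLomega S := ⟨xs, by rw [hxs0]; exact h0, hdelta⟩
    obtain ⟨s'', _, hpref, hcard⟩ := H S hinf stem (fun i => (hpre i i.2).symm)
    have hgets : ∀ i (hi : i < s''.length),
        s''.get ⟨i, hi⟩ = cyc.get ⟨i % cyc.length, Nat.mod_lt _ hclpos⟩ := by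
      intro i hi
      rw [prefix_append_get hpref i hi]
      obtain ⟨hm, he⟩ := htail i
      exact he
    obtain ⟨r, hr⟩ := periodic_label hclpos hper hcyc_lab s''.length s'' le_rfl hgets
    have hsplitr : List.range (a0 + r) = List.range a0 ++ List.range' a0 r := by
      rw [List.range_eq_range', List.range_eq_range',
        ← List.range'_append_1 (s := 0) (m := a0) (n := r)]
      norm_num
    have hfin : M.labelSeq (stem ++ s'') = ρ (a0 + r) := by
      rw [labelSeq_append, hstemlab, hr]
      simp only [hρ, hsplitr, List.map_append, List.append_assoc]
    rw [hfin] at hcard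
    exact key2 _ hcard
  obtain ⟨j1, j2, hne, heq⟩ := Fintype.exists_ne_map_eq_of_card_lt
    (fun j : Fin (Fintype.card X + 1) => g ((j : ℕ) * n)) (by simp)
  have hper : ∀ (d : ℕ) (x : ℕ), Lam (x + d * n) = Lam x := by
    intro d x
    simp only [hLam]
    congr 1
    apply Fin.ext
    simp only []
    exact Nat.add_mul_mod_self_right x d n
  have call : ∀ jl jh : ℕ, jl < jh → jh ≤ Fintype.card X → g (jl * n) = g (jh * n) →
      False := by
    intro jl jh hjlh hjh heq'
    have hsum : jl * n + (jh - jl) * n = jh * n := by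
      rw [Nat.sub_mul]
      have : jl * n ≤ jh * n := Nat.mul_le_mul_right _ (le_of_lt hjlh)
      omega
    refine main (jl * n) ((jh - jl) * n) (Nat.mul_pos (by omega) hn) ?_ (hper _) ?_
    · rw [hsum, hmBig]
      calc jh * n ≤ Fintype.card X * n := Nat.mul_le_mul_right _ hjh
        _ ≤ n * (Fintype.card X + 1) := by
            rw [Nat.mul_comm]
            exact Nat.mul_le_mul_left _ (by omega)
    · rw [hsum]
      exact heq'
  rcases Nat.lt_or_ge (j1 : ℕ) (j2 : ℕ) with hlt | hge
  · exact call j1 j2 hlt (by omega) heq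
  · have hlt2 : (j2 : ℕ) < (j1 : ℕ) := by
      rcases Nat.lt_or_ge (j2 : ℕ) (j1 : ℕ) with h' | h'
      · exact h'
      · exact absurd (Fin.ext (by omega)) hne
    exact call j2 j1 hlt2 (by omega) heq.symm
theorem ccrun_lefts {y y' z : X} {w : List T} (h : M.UnobsRun y w y') :
    M.CCRun (y, z) (w.map CEvent.left) (y', z) := by
  induction w generalizing y with
  | nil =>
      show (y, z) = (y', z)
      rw [show y = y' from h.1]
  | cons t w ih =>
      obtain ⟨m, hm, hr⟩ := h.1
      exact ⟨(m, z), Or.inl ⟨hm, h.2 t (by simp), rfl⟩,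
        ih ⟨hr, fun a ha => h.2 a (by simp [ha])⟩⟩

theorem ccrun_rights {y y' z : X} {w : List T} (h : M.UnobsRun y w y') :
    M.CCRun (z, y) (w.map CEvent.right) (z, y') := by
  induction w generalizing y with
  | nil =>
      show (z, y) = (z, y')
      rw [show y = y' from h.1]
  | cons t w ih =>
      obtain ⟨m, hm, hr⟩ := h.1
      exact ⟨(z, m), Or.inl ⟨rfl, h.2 t (by simp), hm⟩,
        ih ⟨hr, fun a ha => h.2 a (by simp [ha])⟩⟩

theorem ccl_map_left (w : List T) : M.ccLabelSeq (w.map CEvent.left) = [] :=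
  List.filterMap_eq_nil_iff.2 (by simp [cLabel])

theorem ccLabelSeq_cons_none {e : CEvent T} (h : M.cLabel e = none) (w : List (CEvent T)) :
    M.ccLabelSeq (e :: w) = M.ccLabelSeq w := by
  simp [ccLabelSeq, List.filterMap_cons, h]

theorem ccLabelSeq_cons_some {e : CEvent T} {μ : O} (h : M.cLabel e = some μ)
    (w : List (CEvent T)) : M.ccLabelSeq (e :: w) = μ :: M.ccLabelSeq w := by
  simp [ccLabelSeq, List.filterMap_cons, h]

theorem ccl_map_right (w : List T) : M.ccLabelSeq (w.map CEvent.right) = [] :=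
  List.filterMap_eq_nil_iff.2 (by simp [cLabel])

theorem ccl_tail (wa wb : List T) :
    M.ccLabelSeq (wa.map CEvent.left ++ wb.map CEvent.right) = [] := by
  rw [ccLabelSeq_append, ccl_map_left, ccl_map_right]
  rfl

/-- One backward step of the cycle construction. -/
theorem backstep [Fintype X] {σ : List O} {lam : O} {a' b' : X}
    (ha' : a' ∈ M.est (σ ++ [lam])) (hb' : b' ∈ M.est (σ ++ [lam])) (hab' : a' ≠ b')
    (htwo : ∃ e f : X, e ∈ M.est σ ∧ f ∈ M.est σ ∧ e ≠ f) :
    ∃ a b : X, a ∈ M.est σ ∧ b ∈ M.est σ ∧ a ≠ b ∧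
      ∃ w : List (CEvent T), M.CCRun (a, b) w (a', b') ∧
        ((∃ μ : O, M.ccLabelSeq w = [μ]) ∨
         (M.ccLabelSeq w = [] ∧ ∃ pa pb : List T,
            M.UnobsRun a pa a' ∧ M.UnobsRun b pb b' ∧ pa ++ pb ≠ [])) := by
  classical
  obtain ⟨ca, ta, ua, wa, hca, hdta, hlta, hwa⟩ := est_obs_back ha'
  obtain ⟨cb, tb, ub, wb, hcb, hdtb, hltb, hwb⟩ := est_obs_back hb'
  by_cases hc : ca = cb
  · -- the two backward chains merge; use a different partner `d`
    subst hc
    have hd : ∃ d, d ∈ M.est σ ∧ d ≠ ca := by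
      obtain ⟨e, f, he, hf, hef⟩ := htwo
      rcases eq_or_ne e ca with rfl | hne
      · exact ⟨f, hf, fun h => hef h.symm⟩
      · exact ⟨e, he, hne⟩
    obtain ⟨d, hdmem, hdne⟩ := hd
    by_cases heps : ∃ (t' : CEvent T) (r : X × X),
        M.ccTrans (ca, ca) t' r ∧ ∀ t'' : CEvent T, ¬ M.ccTrans (ca, d) t'' r
    · -- the added ε-transition is available
      refine ⟨ca, d, hca, hdmem, fun h => hdne h.symm, 
        CEvent.eps :: CEvent.both ta tb :: (wa.map CEvent.left ++ wb.map CEvent.right),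
        ?_, Or.inl ⟨lam, ?_⟩⟩
      · refine ⟨(ca, ca), Or.inr ⟨rfl, fun h => hdne h.symm, Or.inl rfl, heps⟩, ?_⟩
        refine ⟨(ua, ub), Or.inl ⟨hdta, hdtb, lam, hlta, hltb⟩, ?_⟩
        exact ccrun_append (ccrun_lefts hwa) (ccrun_rights hwb)
      · rw [ccLabelSeq_cons_none (show M.cLabel (CEvent.eps : CEvent T) = none from rfl), ccLabelSeq_cons_some (show M.cLabel (CEvent.both ta tb) = some lam from hlta), ccl_tail]
    · -- no ε-transition: the pair (ca,d) can match the move of (ca,ca)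
      push_neg at heps
      obtain ⟨t'', ht''⟩ := heps (CEvent.both ta tb) (ua, ub) ⟨hdta, hdtb, lam, hlta, hltb⟩
      cases t'' with
      | both t2 t2' =>
          obtain ⟨d1, d2, mu, l1, l2⟩ := ht''
          refine ⟨ca, d, hca, hdmem, fun h => hdne h.symm,
            CEvent.both t2 t2' :: (wa.map CEvent.left ++ wb.map CEvent.right),
            ⟨(ua, ub), Or.inl ⟨d1, d2, mu, l1, l2⟩,
              ccrun_append (ccrun_lefts hwa) (ccrun_rights hwb)⟩, Or.inl ⟨mu, ?_⟩⟩
          rw [ccLabelSeq_cons_some (show M.cLabel (CEvent.both t2 t2') = some mu from l1), ccl_tail]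
      | left t3 =>
          obtain ⟨d1, l1, e1⟩ := ht''
          -- d1 : M.delta ca t3 ua, e1 : d = ub
          refine ⟨ca, d, hca, hdmem, fun h => hdne h.symm,
            CEvent.left t3 :: (wa.map CEvent.left ++ wb.map CEvent.right),
            ⟨(ua, d), Or.inl ⟨d1, l1, rfl⟩, ?_⟩, Or.inr ⟨?_, t3 :: wa, wb,
              ⟨⟨ua, d1, hwa.1⟩, ?_⟩, by rw [show d = ub from e1]; exact hwb, by simp⟩⟩
          · refine ccrun_append (ccrun_lefts hwa) ?_
            rw [show d = ub from e1]
            exact ccrun_rights hwb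
          · rw [ccLabelSeq_cons_none (show M.cLabel (CEvent.left t3) = none from rfl), ccl_tail]
          · intro t ht
            rcases List.mem_cons.1 ht with rfl | ht
            · exact l1
            · exact hwa.2 t ht
      | right t4 =>
          obtain ⟨e1, l1, d2⟩ := ht''
          -- e1 : ca = ua, d2 : M.delta d t4 ub
          refine ⟨ca, d, hca, hdmem, fun h => hdne h.symm,
            CEvent.right t4 :: (wa.map CEvent.left ++ wb.map CEvent.right),
            ⟨(ca, ub), Or.inl ⟨rfl, l1, d2⟩, ?_⟩, Or.inr ⟨?_, wa, t4 :: wb,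
              by rw [show ca = ua from e1]; exact hwa, ⟨⟨ub, d2, hwb.1⟩, ?_⟩,
              by simp⟩⟩
          · refine ccrun_append ?_ (ccrun_rights hwb)
            rw [show ca = ua from e1]
            exact ccrun_lefts hwa
          · rw [ccLabelSeq_cons_none (show M.cLabel (CEvent.right t4) = none from rfl), ccl_tail]
          · intro t ht
            rcases List.mem_cons.1 ht with rfl | ht
            · exact l1
            · exact hwb.2 t ht
      | eps => exact ht''.elim
  · -- distinct backward states
    refine ⟨ca, cb, hca, hcb, hc,
      CEvent.both ta tb :: (wa.map CEvent.left ++ wb.map CEvent.right),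
      ⟨(ua, ub), Or.inl ⟨hdta, hdtb, lam, hlta, hltb⟩,
        ccrun_append (ccrun_lefts hwa) (ccrun_rights hwb)⟩, Or.inl ⟨lam, ?_⟩⟩
    rw [ccLabelSeq_cons_some (show M.cLabel (CEvent.both ta tb) = some lam from hlta), ccl_tail]
/-- Backward chain of distinct estimate pairs with connecting CC-runs. -/
theorem chain [Fintype X] {L : ℕ} {σ : ℕ → List O} {lamf : ℕ → O}
    (hσ : ∀ i, i < L → σ (i + 1) = σ i ++ [lamf i])
    (htwo : ∀ i, i ≤ L → ∃ e f : X, e ∈ M.est (σ i) ∧ f ∈ M.est (σ i) ∧ e ≠ f) :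
    ∃ (a b : ℕ → X) (w : ℕ → List (CEvent T)),
      (∀ i, i ≤ L → a i ∈ M.est (σ i) ∧ b i ∈ M.est (σ i) ∧ a i ≠ b i) ∧
      (∀ i, i < L → M.CCRun (a i, b i) (w i) (a (i + 1), b (i + 1)) ∧
        ((∃ μ : O, M.ccLabelSeq (w i) = [μ]) ∨
         (M.ccLabelSeq (w i) = [] ∧ ∃ pa pb : List T,
            M.UnobsRun (a i) pa (a (i + 1)) ∧ M.UnobsRun (b i) pb (b (i + 1)) ∧
            pa ++ pb ≠ []))) := by
  classical
  have hrec : ∀ m, m ≤ L → ∃ (a b : ℕ → X) (w : ℕ → List (CEvent T)),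
      (∀ i, L - m ≤ i → i ≤ L → a i ∈ M.est (σ i) ∧ b i ∈ M.est (σ i) ∧ a i ≠ b i) ∧
      (∀ i, L - m ≤ i → i < L → M.CCRun (a i, b i) (w i) (a (i + 1), b (i + 1)) ∧
        ((∃ μ : O, M.ccLabelSeq (w i) = [μ]) ∨
         (M.ccLabelSeq (w i) = [] ∧ ∃ pa pb : List T,
            M.UnobsRun (a i) pa (a (i + 1)) ∧ M.UnobsRun (b i) pb (b (i + 1)) ∧
            pa ++ pb ≠ []))) := by
    intro m
    induction m with
    | zero =>
        intro _
        obtain ⟨e, f, he, hf, hef⟩ := htwo L le_rfl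
        refine ⟨fun _ => e, fun _ => f, fun _ => [], ?_, ?_⟩
        · intro i h1 h2
          have : i = L := by omega
          subst this
          exact ⟨he, hf, hef⟩
        · intro i h1 h2
          omega
    | succ m ih =>
        intro hm
        obtain ⟨a, b, w, H1, H2⟩ := ih (by omega)
        set l := L - (m + 1) with hl
        have hlL : l < L := by omega
        have hl1 : L - m = l + 1 := by omega
        obtain ⟨a0, b0, ha0, hb0, hne0, w0, hw0run, hw0lab⟩ :=
          backstep (σ := σ l) (lam := lamf l)
            (by rw [← hσ l hlL]; exact (H1 (l + 1) (by omega) (by omega)).1)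
            (by rw [← hσ l hlL]; exact (H1 (l + 1) (by omega) (by omega)).2.1)
            (H1 (l + 1) (by omega) (by omega)).2.2
            (htwo l (by omega))
        refine ⟨fun i => if i = l then a0 else a i, fun i => if i = l then b0 else b i,
          fun i => if i = l then w0 else w i, ?_, ?_⟩
        · intro i h1 h2
          by_cases hi : i = l
          · rw [hi]
            simp only [if_pos rfl]
            exact ⟨ha0, hb0, hne0⟩
          · simp only [if_neg hi]
            exact H1 i (by omega) h2
        · intro i h1 h2
          by_cases hi : i = l
          · rw [hi]
            have hi1 : ¬ (l + 1 = l) := by omega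
            simp only [if_pos rfl, if_neg hi1]
            exact ⟨hw0run, hw0lab⟩
          · have hi1 : ¬ (i + 1 = l) := by omega
            simp only [if_neg hi, if_neg hi1]
            exact H2 i (by omega) h2
  obtain ⟨a, b, w, H1, H2⟩ := hrec L le_rfl
  exact ⟨a, b, w, fun i h2 => H1 i (by omega) h2, fun i h => H2 i (by omega) h⟩
def Cond9 (M : FSA X T O) : Prop :=
  ∃ p : X × X, M.CCReachable p ∧ p.1 ≠ p.2 ∧
    ∃ (x' : X) (s1 s2 : List T), M.UnobsRun p.1 s1 x' ∧ s2 ≠ [] ∧ M.UnobsRun x' s2 x'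

def Cond10 (M : FSA X T O) : Prop :=
  ∃ (n : ℕ), 0 < n ∧
    ∃ (p : Fin (n + 1) → X × X) (s : Fin n → List (CEvent T)),
      M.CCReachable (p 0) ∧ p 0 = p (Fin.last n) ∧
      (∀ i : Fin n, M.CCRun (p i.castSucc) (s i) (p i.succ)) ∧
      (∀ i : Fin n, (p i.castSucc).1 ≠ (p i.castSucc).2) ∧
      ∀ i : Fin n, ∃ σ : O, M.ccLabelSeq (s i) = [σ]

theorem stretch_analysis [Fintype X] {L : ℕ} {σ : ℕ → List O} {lamf : ℕ → O}
    (hL : (Fintype.card X * Fintype.card X + 1) * (2 * Fintype.card X + 1) ≤ L)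
    (hσ : ∀ i, i < L → σ (i + 1) = σ i ++ [lamf i])
    (htwo : ∀ i, i ≤ L → ∃ e f : X, e ∈ M.est (σ i) ∧ f ∈ M.est (σ i) ∧ e ≠ f) :
    Cond9 M ∨ Cond10 M := by
  classical
  obtain ⟨a, b, w, H1, H2⟩ := chain hσ htwo
  set N := Fintype.card X with hN
  set D := 2 * N + 1 with hD
  set R := N * N + 1 with hR
  by_cases hcase : ∃ i, i + D ≤ L ∧ ∀ j, i ≤ j → j < i + D → M.ccLabelSeq (w j) = []
  · -- a long unobservable stretch: condition (9)
    left
    obtain ⟨i, hiD, hdeg⟩ := hcase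
    have comp : ∀ c, c ≤ D → ∃ PA PB : List T,
        M.UnobsRun (a i) PA (a (i + c)) ∧ M.UnobsRun (b i) PB (b (i + c)) ∧
        c ≤ PA.length + PB.length := by
      intro c
      induction c with
      | zero => exact fun _ => ⟨[], [], ⟨rfl, by simp⟩, ⟨rfl, by simp⟩, by omega⟩
      | succ c ihc =>
          intro hc
          obtain ⟨PA, PB, hPA, hPB, hlen⟩ := ihc (by omega)
          have hseg := H2 (i + c) (by omega)
          rcases hseg.2 with ⟨μ, hμ⟩ | ⟨_, pa, pb, hpa, hpb, hne⟩
          · exact absurd hμ (by rw [hdeg (i + c) (by omega) (by omega)]; simp)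
          · refine ⟨PA ++ pa, PB ++ pb, unobs_append hPA hpa, unobs_append hPB hpb, ?_⟩
            have : 0 < (pa ++ pb).length := List.length_pos_iff.2 hne
            simp only [List.length_append] at this ⊢
            omega
    obtain ⟨PA, PB, hPA, hPB, hlen⟩ := comp D le_rfl
    have hiL : i ≤ L := by omega
    have hmem := H1 i hiL
    have hcases : N < PA.length ∨ N < PB.length := by omega
    rcases hcases with hbig | hbig
    · obtain ⟨x', s1, s2, hs1, hs2ne, hs2⟩ := run_pigeonhole hPA hbig
      exact ⟨(a i, b i), ccreach_of_est hmem.1 hmem.2.1, hmem.2.2, x', s1, s2, hs1, hs2ne, hs2⟩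
    · obtain ⟨x', s1, s2, hs1, hs2ne, hs2⟩ := run_pigeonhole hPB hbig
      exact ⟨(b i, a i), ccreach_of_est hmem.2.1 hmem.1, Ne.symm hmem.2.2, x', s1, s2,
        hs1, hs2ne, hs2⟩
  · -- every window has an observable segment: condition (10)
    right
    push_neg at hcase
    have merge : ∀ d i, i + d < L → (∀ q, i ≤ q → q < i + d → M.ccLabelSeq (w q) = []) →
        M.ccLabelSeq (w (i + d)) ≠ [] →
        ∃ (W : List (CEvent T)) (μ : O),
          M.CCRun (a i, b i) W (a (i + d + 1), b (i + d + 1)) ∧ M.ccLabelSeq W = [μ] := by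
      intro d
      induction d with
      | zero =>
          intro i h1 h2 h3
          rcases (H2 i (by omega)).2 with ⟨μ, hμ⟩ | ⟨hdeg, _⟩
          · exact ⟨w i, μ, (H2 i (by omega)).1, hμ⟩
          · exact absurd hdeg h3
      | succ d ihd =>
          intro i h1 h2 h3
          have e : i + 1 + d = i + (d + 1) := by omega
          have hdegi : M.ccLabelSeq (w i) = [] := h2 i le_rfl (by omega)
          have h3' : M.ccLabelSeq (w (i + 1 + d)) ≠ [] := by rw [e]; exact h3
          obtain ⟨W, μ, hW, hWl⟩ := ihd (i + 1) (by omega)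
            (fun q hq1 hq2 => h2 q (by omega) (by omega)) h3'
          rw [e] at hW
          exact ⟨w i ++ W, μ, ccrun_append (H2 i (by omega)).1 hW,
            by rw [ccLabelSeq_append, hdegi, hWl]; rfl⟩
    have gseq : ∀ r, r * D ≤ L → ∃ γ : ℕ → ℕ, γ 0 = 0 ∧ (∀ q, q ≤ r → γ q ≤ q * D) ∧
        (∀ q, q < r → γ q < γ (q + 1) ∧ ∃ (W : List (CEvent T)) (μ : O),
          M.CCRun (a (γ q), b (γ q)) W (a (γ (q + 1)), b (γ (q + 1))) ∧
          M.ccLabelSeq W = [μ]) := by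
      intro r
      induction r with
      | zero =>
          exact fun _ => ⟨fun _ => 0, rfl, fun q hq => Nat.zero_le _, fun q hq => by omega⟩
      | succ r ih =>
          intro hr1
          have hmul : (r + 1) * D = r * D + D := Nat.succ_mul r D
          obtain ⟨γ, hγ0, hγb, hγs⟩ := ih (by omega)
          have hbound : γ r + D ≤ L := by
            have := hγb r le_rfl
            omega
          obtain ⟨j, hj1, hj2, hj3⟩ := hcase (γ r) (by omega)
          have hex : ∃ d, M.ccLabelSeq (w (γ r + d)) ≠ [] :=
            ⟨j - γ r, by rw [show γ r + (j - γ r) = j by omega]; exact hj3⟩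
          set d0 := Nat.find hex with hd0def
          have hd0 : M.ccLabelSeq (w (γ r + d0)) ≠ [] := Nat.find_spec hex
          have hd0min : ∀ q, q < d0 → M.ccLabelSeq (w (γ r + q)) = [] := by
            intro q hq
            have := Nat.find_min hex hq
            exact not_not.1 this
          have hd0D : d0 < D := by
            have h5 : d0 ≤ j - γ r := Nat.find_min' hex
              (by rw [show γ r + (j - γ r) = j by omega]; exact hj3)
            omega
          obtain ⟨W, μ, hW, hWl⟩ := merge d0 (γ r) (by omega)
            (fun q hq1 hq2 => by
              have := hd0min (q - γ r) (by omega)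
              rwa [show γ r + (q - γ r) = q by omega] at this) hd0
          refine ⟨fun q => if q = r + 1 then γ r + d0 + 1 else γ q, ?_, ?_, ?_⟩
          · simp only [if_neg (by omega : ¬ (0 = r + 1))]
            exact hγ0
          · intro q hq
            by_cases hq2 : q = r + 1
            · simp only [if_pos hq2]
              rw [hq2, hmul]
              have h5 := hγb r le_rfl
              omega
            · simp only [if_neg hq2]
              exact hγb q (by omega)
          · intro q hq
            by_cases hq2 : q = r
            · have e1 : ¬ (q = r + 1) := by omega
              have e2 : q + 1 = r + 1 := by omega
              simp only [if_neg e1, if_pos e2]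
              rw [hq2]
              exact ⟨by omega, W, μ, hW, hWl⟩
            · have e1 : ¬ (q = r + 1) := by omega
              have e2 : ¬ (q + 1 = r + 1) := by omega
              simp only [if_neg e1, if_neg e2]
              exact hγs q (by omega)
    obtain ⟨γ, hγ0, hγb, hγs⟩ := gseq R (by
      have : R * D ≤ L := hL
      exact this)
    have hsegs : ∀ q, q < R → ∃ (W : List (CEvent T)) (μ : O),
        M.CCRun (a (γ q), b (γ q)) W (a (γ (q + 1)), b (γ (q + 1))) ∧
        M.ccLabelSeq W = [μ] := fun q hq => (hγs q hq).2
    choose Wf μf hWf hμf using hsegs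
    have hγL : ∀ q, q ≤ R → γ q ≤ L := by
      intro q hq
      have h5 := hγb q hq
      have h6 : q * D ≤ R * D := Nat.mul_le_mul_right _ hq
      omega
    obtain ⟨q1, q2, hqne, hqeq⟩ := Fintype.exists_ne_map_eq_of_card_lt
      (fun q : Fin (R + 1) => ((a (γ (q : ℕ)), b (γ (q : ℕ))) : X × X))
      (by simp only [Fintype.card_prod, Fintype.card_fin, ← hN]; omega)
    have main : ∀ ql qh : ℕ, ql < qh → qh ≤ R →
        (a (γ ql), b (γ ql)) = (a (γ qh), b (γ qh)) → Cond10 M := by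
      intro ql qh hlh hhR hpeq
      refine ⟨qh - ql, by omega, fun i => (a (γ (ql + (i : ℕ))), b (γ (ql + (i : ℕ)))),
        fun i => Wf (ql + (i : ℕ)) (by have := i.isLt; omega), ?_, ?_, ?_, ?_, ?_⟩
      · have hmem := H1 (γ ql) (hγL ql (by omega))
        simpa using ccreach_of_est hmem.1 hmem.2.1
      · simp only [Fin.val_last, Fin.val_zero, Nat.add_zero]
        rw [show ql + (qh - ql) = qh by omega]
        exact hpeq
      · intro i
        simp only [Fin.coe_castSucc, Fin.val_succ]
        exact hWf (ql + (i : ℕ)) (by have := i.isLt; omega)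
      · intro i
        simp only [Fin.coe_castSucc]
        exact (H1 (γ (ql + (i : ℕ))) (hγL _ (by have := i.isLt; omega))).2.2
      · intro i
        exact ⟨μf (ql + (i : ℕ)) (by have := i.isLt; omega), hμf _ _⟩
    rcases Nat.lt_or_ge (q1 : ℕ) (q2 : ℕ) with hlt | hge
    · exact main q1 q2 hlt (by omega) hqeq
    · have hlt2 : (q2 : ℕ) < (q1 : ℕ) := by
        rcases Nat.lt_or_ge (q2 : ℕ) (q1 : ℕ) with h' | h'
        · exact h'
        · exact absurd (Fin.ext (by omega)) hqne
      exact main q2 q1 hlt2 (by omega) hqeq.symm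
theorem not_spd_rhs [Fintype X] (h : ¬ M.SPD) : Cond9 M ∨ Cond10 M := by
  classical
  set N := Fintype.card X with hN
  set K := (N * N + 1) * (2 * N + 1) + 2 with hK
  have hp : 0 < (N * N + 1) * (2 * N + 1) := Nat.mul_pos (by omega) (by omega)
  have hmain : ∃ s : ℕ → T, M.InLomega s ∧ ∃ s' : List T, IsPrefixOf s' s ∧
      ∀ s'' : List T, (M.labelSeq s'').length < K → IsPrefixOf (s' ++ s'') s →
        (M.est (M.labelSeq (s' ++ s''))).ncard ≠ 1 := by
    by_contra hc
    push_neg at hc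
    apply h
    refine ⟨K, by omega, ?_⟩
    intro s hs s' hs'
    exact hc s hs s' hs'
  obtain ⟨s, hinf, s', hpre, Hmain⟩ := hmain
  obtain ⟨xs, hxs0, hdelta⟩ := hinf
  have hrunm : ∀ m, M.Run (xs 0) ((List.range m).map s) (xs m) := by
    intro m
    rw [List.range_eq_range']
    simpa using inf_run_slice hdelta m 0
  have hestm : ∀ m, xs m ∈ M.est (M.labelSeq ((List.range m).map s)) :=
    fun m => ⟨xs 0, hxs0, (List.range m).map s, rfl, hrunm m⟩
  set m0 := s'.length with hm0
  have hs'eq : s' = (List.range m0).map s := isPrefixOf_eq hpre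
  set oc : ℕ → ℕ := fun m => (M.labelSeq ((List.range m).map s)).length with hoc
  have hoc_step : ∀ m, oc (m + 1) = oc m + (if M.label (s m) = none then 0 else 1) := by
    intro m
    simp only [hoc]
    rw [List.range_succ, List.map_append, labelSeq_append, List.length_append]
    congr 1
    rcases ho : M.label (s m) with _ | mu <;> simp [labelSeq, ho]
  have hoc_mono : ∀ a b, a ≤ b → oc a ≤ oc b := by
    intro a b hab
    induction b with
    | zero => have : a = 0 := by omega
              rw [this]
    | succ b ih =>
        rcases Nat.lt_or_ge a (b + 1) with h1 | h1
        · have := ih (by omega)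
          have h2 := hoc_step b
          omega
        · have : a = b + 1 := by omega
          rw [this]
  have hsplitm : ∀ m, m0 ≤ m →
      (List.range m).map s = s' ++ (List.range' m0 (m - m0)).map s := by
    intro m hm
    rw [hs'eq, ← List.map_append]
    congr 1
    rw [List.range_eq_range', List.range_eq_range']
    conv_lhs => rw [show m = m - m0 + m0 by omega]
    have h9 := (List.range'_append_1 (s := 0) (m := m0) (n := m - m0)).symm
    simpa [Nat.add_comm] using h9
  have hext : ∀ m, m0 ≤ m → oc m < oc m0 + K →
      (M.est (M.labelSeq ((List.range m).map s))).ncard ≠ 1 := by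
    intro m hm hocm
    have hsp := hsplitm m hm
    have hlenoc : oc m = oc m0 + (M.labelSeq ((List.range' m0 (m - m0)).map s)).length := by
      have h1 := congrArg (fun l => (M.labelSeq l).length) hsp
      simp only [labelSeq_append, List.length_append] at h1
      have h2 : (M.labelSeq s').length = oc m0 := by
        rw [hs'eq]
      rw [h2] at h1
      exact h1
    have h1 := Hmain ((List.range' m0 (m - m0)).map s) (by omega)
      (by rw [← hsp]; exact isPrefixOf_map_range m)
    rw [← hsp] at h1
    exact h1
  have htwo_of : ∀ m, m0 ≤ m → oc m < oc m0 + K →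
      ∃ e f : X, e ∈ M.est (M.labelSeq ((List.range m).map s)) ∧
        f ∈ M.est (M.labelSeq ((List.range m).map s)) ∧ e ≠ f := by
    intro m hm hocm
    obtain ⟨y, hy, hyne⟩ := est_partner (hestm m) (hext m hm hocm)
    exact ⟨y, xs m, hy, hestm m, hyne⟩
  by_cases hbig : ∃ m, oc m0 + (K - 1) ≤ oc m
  · -- Case B: at least K-1 further observations
    have hfind : ∀ v, ∃ m, m0 ≤ m ∧ oc m0 + min v (K - 1) ≤ oc m := by
      intro v
      obtain ⟨m, hm⟩ := hbig
      refine ⟨max m m0, le_max_right _ _, ?_⟩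
      have h1 := hoc_mono m (max m m0) (le_max_left _ _)
      have h2 : min v (K - 1) ≤ K - 1 := min_le_right _ _
      omega
    set β : ℕ → ℕ := fun v => Nat.find (hfind v) with hβ
    have hβspec : ∀ v, v ≤ K - 1 → m0 ≤ β v ∧ oc m0 + v ≤ oc (β v) := by
      intro v hv
      have h1 : m0 ≤ β v ∧ oc m0 + min v (K - 1) ≤ oc (β v) := Nat.find_spec (hfind v)
      have h2 : min v (K - 1) = v := min_eq_left hv
      exact ⟨h1.1, by omega⟩
    have hβeq : ∀ v, v ≤ K - 1 → oc (β v) = oc m0 + v := by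
      intro v hv
      rcases ((hβspec v hv).1).eq_or_lt with he | hgt
      · have h1 := (hβspec v hv).2
        rw [← he] at h1 ⊢
        omega
      · have hmin : ¬ (m0 ≤ β v - 1 ∧ oc m0 + min v (K - 1) ≤ oc (β v - 1)) :=
          Nat.find_min (hfind v) (by
            have h9 : 0 < β v := by omega
            exact Nat.sub_lt h9 one_pos)
        have hmineq : min v (K - 1) = v := min_eq_left hv
        push_neg at hmin
        have h2 := hmin (by omega)
        have h3 := hoc_step (β v - 1)
        have h4 : β v - 1 + 1 = β v := by omega
        rw [h4] at h3
        have h5 := (hβspec v hv).2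
        by_cases hcl : M.label (s (β v - 1)) = none <;> simp [hcl] at h3 <;> omega
    have hβmono : ∀ v, v + 1 ≤ K - 1 → β v ≤ β (v + 1) := by
      intro v hv
      refine Nat.find_min' (hfind v) ⟨(hβspec (v + 1) hv).1, ?_⟩
      have h1 := (hβspec (v + 1) hv).2
      have h2 : min v (K - 1) ≤ v := min_le_left _ _
      omega
    set σf : ℕ → List O := fun v => M.labelSeq ((List.range (β v)).map s) with hσf
    have hσstep : ∀ v, v < K - 2 → ∃ lam : O, σf (v + 1) = σf v ++ [lam] := by
      intro v hv
      have hv1 : v + 1 ≤ K - 1 := by omega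
      have hmono := hβmono v hv1
      have hsp : (List.range (β (v+1))).map s
          = (List.range (β v)).map s ++ (List.range' (β v) (β (v+1) - β v)).map s := by
        rw [← List.map_append]
        congr 1
        rw [List.range_eq_range', List.range_eq_range']
        conv_lhs => rw [show β (v+1) = β (v+1) - β v + β v by omega]
        have h9 := (List.range'_append_1 (s := 0) (m := β v) (n := β (v+1) - β v)).symm
        simpa [Nat.add_comm] using h9
      have hlen1 : (σf (v+1)).length = (σf v).length + 1 := by
        simp only [hσf]
        have e1 : (M.labelSeq ((List.range (β (v+1))).map s)).length = oc (β (v+1)) := rfl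
        have e2 : (M.labelSeq ((List.range (β v)).map s)).length = oc (β v) := rfl
        rw [e1, e2, hβeq (v+1) hv1, hβeq v (by omega)]
        omega
      have hsplit2 : σf (v+1) = σf v ++ M.labelSeq ((List.range' (β v) (β (v+1) - β v)).map s) := by
        simp only [hσf]
        rw [hsp, labelSeq_append]
      set tailL := M.labelSeq ((List.range' (β v) (β (v+1) - β v)).map s) with htl
      have : tailL.length = 1 := by
        have := congrArg List.length hsplit2
        simp only [List.length_append] at this
        omega
      obtain ⟨lam, hlam⟩ := List.length_eq_one_iff.1 this
      exact ⟨lam, by rw [hsplit2, hlam]⟩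
    obtain ⟨lam0, _⟩ := hσstep 0 (by omega)
    choose lamfd hlamf using hσstep
    exact stretch_analysis (M := M) (L := K - 2) (σ := σf)
      (lamf := fun v => if h : v < K - 2 then lamfd v h else lam0)
      (by rw [← hN]; omega)
      (fun i hi => by beta_reduce; rw [dif_pos hi]; exact hlamf i hi)
      (fun i hi => htwo_of (β i) (hβspec i (by omega)).1 (by rw [hβeq i (by omega)]; omega))
  · -- Case A: eventually no observations
    left
    push_neg at hbig
    have hobs_fin : ∃ m1, m0 ≤ m1 ∧ ∀ m, m1 ≤ m → M.label (s m) = none := by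
      by_contra hc
      push_neg at hc
      have grow : ∀ j, ∃ m, m0 ≤ m ∧ oc m0 + j ≤ oc m := by
        intro j
        induction j with
        | zero => exact ⟨m0, le_rfl, by omega⟩
        | succ j ih =>
            obtain ⟨m, hm, hocj⟩ := ih
            obtain ⟨m', hm', hobs⟩ := hc m hm
            have h1 := hoc_step m'
            have h2 := hoc_mono m m' (by omega)
            refine ⟨m' + 1, by omega, ?_⟩
            simp [hobs] at h1
            omega
      obtain ⟨m, _, hm2⟩ := grow (K - 1)
      exact absurd hm2 (by have := hbig m; omega)
    obtain ⟨m1, hm1, hall⟩ := hobs_fin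
    have htail : M.UnobsRun (xs m1) ((List.range' m1 (N + 1)).map s) (xs (m1 + (N + 1))) := by
      refine ⟨inf_run_slice hdelta (N + 1) m1, ?_⟩
      intro t ht
      obtain ⟨q, hq, rfl⟩ := List.mem_map.1 ht
      have := List.mem_range'_1.1 hq
      exact hall q (by omega)
    obtain ⟨x', s1, s2, hs1, hs2ne, hs2⟩ := run_pigeonhole htail (by simp [hN])
    obtain ⟨y, hy, hyne⟩ := est_partner (hestm m1)
      (hext m1 hm1 (by have := hbig m1; omega))
    exact ⟨(xs m1, y), ccreach_of_est (hestm m1) hy, fun hh => hyne hh.symm, x', s1, s2,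
      hs1, hs2ne, hs2⟩

end FSA


/-- `S` is not SPD iff in `CC^ε_A(S)`: (9) there is a reachable state
`(x,x̄)` with `x ≠ x̄` and a transition sequence `x →^{s1} x' →^{s2} x'` in `S` with
`s1 ∈ (T_uo)*`, `s2 ∈ (T_uo)^+`; or (10) there is a reachable transition cycle
`(x1,x̄1) →^{s1'} ⋯ →^{sn'} (x_{n+1},x̄_{n+1})` with `(x1,x̄1) = (x_{n+1},x̄_{n+1})`,
`x_i ≠ x̄_i`, and `ℓ(s_i') ∈ Σ` for all `i ∈ {1,…,n}`. -/
theorem not_spd_iff_cc {X T O : Type} [Fintype X] [Fintype T] [Fintype O]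
    (M : FSA X T O) :
    ¬ M.SPD ↔
      ((∃ p : X × X, M.CCReachable p ∧ p.1 ≠ p.2 ∧
          ∃ (x' : X) (s1 s2 : List T),
            M.UnobsRun p.1 s1 x' ∧ s2 ≠ [] ∧ M.UnobsRun x' s2 x') ∨
       (∃ (n : ℕ), 0 < n ∧
          ∃ (p : Fin (n + 1) → X × X) (s : Fin n → List (CEvent T)),
            M.CCReachable (p 0) ∧ p 0 = p (Fin.last n) ∧
            (∀ i : Fin n, M.CCRun (p i.castSucc) (s i) (p i.succ)) ∧
            (∀ i : Fin n, (p i.castSucc).1 ≠ (p i.castSucc).2) ∧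
            ∀ i : Fin n, ∃ σ : O, M.ccLabelSeq (s i) = [σ])) := by
  constructor
  · intro h
    rcases FSA.not_spd_rhs h with h9 | h10
    · exact Or.inl h9
    · exact Or.inr h10
  · intro hr
    rcases hr with h9 | h10
    · exact FSA.rhs9_not_spd h9
    · exact FSA.rhs10_not_spd h10
end

section
/- Let S be an FSA with observer S_obs and detector S_det. The following are equivalent: (i) there are a reachable state q' of S_det and x∈q' such that |q'|>1 and there is a transition sequence x→^{s1}x'→^{s2}x' in S for some s1∈(T_uo)*, s2∈(T_uo)^+, x'∈X; (ii) there are a reachable state q of S_obs and x∈q such that |q|>1 and there is a transition sequence x→^{s1}x'→^{s2}x' in S for some s1∈(T_uo)*, s2∈(T_uo)^+, x'∈X. -/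
section Aux

variable {X T O : Type} [Fintype X]

/-- Monotonicity of `UR ∘ ReachO`. -/
lemma urReach_mono (M : FSA X T O) {σ : O} {d Q : Set X} (h : d ⊆ Q) :
    M.UR (M.ReachO σ d) ⊆ M.UR (M.ReachO σ Q) := by
  rintro x ⟨z, ⟨a, ha, t, hd, hl⟩, s, hs⟩
  exact ⟨z, ⟨a, h ha, t, hd, hl⟩, s, hs⟩

/-- Detector runs are simulated by observer runs (subset-wise). -/
lemma det_to_obs (M : FSA X T O) :
    ∀ (w : List O) (d q' : Set X), M.DetRun d w q' → ∀ Q : Set X, d ⊆ Q →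
      ∃ Q', M.ObsRun Q w Q' ∧ q' ⊆ Q' := by
  intro w
  induction w with
  | nil =>
    intro d q' h Q hdQ
    cases h
    exact ⟨Q, rfl, hdQ⟩
  | cons σ w ih =>
    rintro d q' ⟨d1, hT, hrun⟩ Q hdQ
    have hd1 : d1 ⊆ M.UR (M.ReachO σ d) := by
      rcases hT with ⟨_, h1, _⟩ | ⟨_, h1⟩
      · exact h1
      · exact h1.le
    have hne : (M.UR (M.ReachO σ d)).Nonempty := by
      rcases hT with ⟨h1, _, _⟩ | ⟨h1, _⟩ <;>
        exact Set.nonempty_of_ncard_ne_zero (by omega)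
    have hsub : M.UR (M.ReachO σ d) ⊆ M.UR (M.ReachO σ Q) := urReach_mono M hdQ
    obtain ⟨Q', hQ', hq'⟩ := ih d1 q' hrun (M.UR (M.ReachO σ Q)) (hd1.trans hsub)
    exact ⟨Q', ⟨M.UR (M.ReachO σ Q), ⟨rfl, hne.mono hsub⟩, hQ'⟩, hq'⟩

/-- Observer runs are simulated by detector runs tracking two states. -/
lemma obs_to_det (M : FSA X T O) :
    ∀ (w : List O) (Q q : Set X), M.ObsRun Q w q → ∀ x ∈ q, ∀ y ∈ q,
      ∃ a ∈ Q, ∃ b ∈ Q, ∀ d : Set X, a ∈ d → b ∈ d →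
        ∃ d', M.DetRun d w d' ∧ x ∈ d' ∧ y ∈ d' := by
  intro w
  induction w with
  | nil =>
    intro Q q h x hx y hy
    cases h
    exact ⟨x, hx, y, hy, fun d hxd hyd => ⟨d, rfl, hxd, hyd⟩⟩
  | cons σ w ih =>
    rintro Q q ⟨Q1, ⟨hQ1, hQ1ne⟩, hrun⟩ x hx y hy
    obtain ⟨a1, ha1, b1, hb1, hsim⟩ := ih Q1 q hrun x hx y hy
    rw [hQ1] at ha1 hb1
    obtain ⟨za, ⟨a, haQ, ta, hda, hla⟩, sa, hsa⟩ := ha1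
    obtain ⟨zb, ⟨b, hbQ, tb, hdb, hlb⟩, sb, hsb⟩ := hb1
    refine ⟨a, haQ, b, hbQ, fun d had hbd => ?_⟩
    have ha1d : a1 ∈ M.UR (M.ReachO σ d) := ⟨za, ⟨a, had, ta, hda, hla⟩, sa, hsa⟩
    have hb1d : b1 ∈ M.UR (M.ReachO σ d) := ⟨zb, ⟨b, hbd, tb, hdb, hlb⟩, sb, hsb⟩
    set S := M.UR (M.ReachO σ d) with hS
    by_cases hab : a1 = b1
    · subst hab
      rcases eq_or_lt_of_le (show 1 ≤ S.ncard from (Set.ncard_pos S.toFinite).2 ⟨a1, ha1d⟩) with h1 | h1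
      · -- ncard S = 1
        have hd1 : M.detTrans d σ S := Or.inr ⟨h1.symm, rfl⟩
        obtain ⟨d', hd', hxd', hyd'⟩ := hsim S ha1d ha1d
        exact ⟨d', ⟨S, hd1, hd'⟩, hxd', hyd'⟩
      · -- ncard S > 1
        obtain ⟨z, hzS, hz⟩ := Set.exists_ne_of_one_lt_ncard h1 a1
        have hpair : ({a1, z} : Set X) ⊆ S := by
          rintro u (rfl | rfl); exacts [ha1d, hzS]
        have hd1 : M.detTrans d σ {a1, z} :=
          Or.inl ⟨h1, hpair, Set.ncard_pair (Ne.symm hz)⟩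
        obtain ⟨d', hd', hxd', hyd'⟩ := hsim {a1, z} (Or.inl rfl) (Or.inl rfl)
        exact ⟨d', ⟨_, hd1, hd'⟩, hxd', hyd'⟩
    · have hpair : ({a1, b1} : Set X) ⊆ S := by
        rintro u (rfl | rfl); exacts [ha1d, hb1d]
      have h2 : ({a1, b1} : Set X).ncard = 2 := Set.ncard_pair hab
      have h1 : 1 < S.ncard := by
        have := Set.ncard_le_ncard hpair S.toFinite
        omega
      have hd1 : M.detTrans d σ {a1, b1} := Or.inl ⟨h1, hpair, h2⟩
      obtain ⟨d', hd', hxd', hyd'⟩ := hsim {a1, b1} (Or.inl rfl) (Or.inr rfl)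
      exact ⟨d', ⟨_, hd1, hd'⟩, hxd', hyd'⟩

end Aux

/-- Equivalence of condition (5) on the detector and condition (3) on
the observer: a reachable state containing a state `x` of `S` from which a reachable
unobservable transition cycle starts, the state having cardinality `> 1`. -/
theorem detector_iff_observer_unobs_cycle {X T O : Type} [Fintype X] [Fintype T] [Fintype O]
    (M : FSA X T O) :
    (∃ q' : Set X, M.DetReachable q' ∧ 1 < q'.ncard ∧
        ∃ x ∈ q', ∃ (x' : X) (s1 s2 : List T),
          M.UnobsRun x s1 x' ∧ s2 ≠ [] ∧ M.UnobsRun x' s2 x') ↔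
    (∃ q : Set X, M.ObsReachable q ∧ 1 < q.ncard ∧
        ∃ x ∈ q, ∃ (x' : X) (s1 s2 : List T),
          M.UnobsRun x s1 x' ∧ s2 ≠ [] ∧ M.UnobsRun x' s2 x') := by
  
  constructor
  · rintro ⟨q', ⟨w, hrun⟩, hcard, x, hx, rest⟩
    obtain ⟨Q', hQ', hsub⟩ := det_to_obs M w M.obsInit q' hrun M.obsInit (le_refl _)
    refine ⟨Q', ⟨w, hQ'⟩, lt_of_lt_of_le hcard (Set.ncard_le_ncard hsub Q'.toFinite),
      x, hsub hx, rest⟩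
  · rintro ⟨q, ⟨w, hrun⟩, hcard, x, hx, rest⟩
    obtain ⟨y, hy, hyx⟩ := Set.exists_ne_of_one_lt_ncard hcard x
    obtain ⟨a, ha, b, hb, hsim⟩ := obs_to_det M w M.obsInit q hrun x hx y hy
    obtain ⟨d', hd', hxd', hyd'⟩ := hsim M.obsInit ha hb
    refine ⟨d', ⟨w, hd'⟩, ?_, x, hxd', rest⟩
    exact (Set.one_lt_ncard_iff d'.toFinite).2 ⟨x, y, hxd', hyd', (Ne.symm hyx)⟩
end

section
/- Let S be an FSA with observer S_obs and detector S_det. The following are equivalent: (i) S_det has a reachable transition cycle all of whose states have cardinality 2; (ii) S_obs has a reachable transition cycle in which no state is a singleton. -/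
namespace FSAAux

open FSA

variable {X T O : Type}

/-- One observer step. -/
def ostep (M : FSA X T O) (σ : O) (q : Set X) : Set X := M.UR (M.ReachO σ q)

lemma ostep_mono (M : FSA X T O) (σ : O) {q p : Set X} (h : q ⊆ p) :
    ostep M σ q ⊆ ostep M σ p := by
  rintro x' ⟨z, ⟨x, hx, ht⟩, s, hs⟩
  exact ⟨z, ⟨x, h hx, ht⟩, s, hs⟩

lemma mem_ostep (M : FSA X T O) (σ : O) (q : Set X) (x' : X) :
    x' ∈ ostep M σ q ↔ ∃ x ∈ q, x' ∈ ostep M σ {x} := by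
  constructor
  · rintro ⟨z, ⟨x, hx, ht⟩, s, hs⟩
    exact ⟨x, hx, z, ⟨x, rfl, ht⟩, s, hs⟩
  · rintro ⟨x, hx, z, ⟨x0, hx0, ht⟩, s, hs⟩
    have : x0 = x := hx0
    subst this
    exact ⟨z, ⟨x0, hx, ht⟩, s, hs⟩

lemma detTrans_sub (M : FSA X T O) {q q' : Set X} {σ : O} (h : M.detTrans q σ q') :
    q' ⊆ ostep M σ q := by
  rcases h with ⟨_, h2, _⟩ | ⟨_, h2⟩
  · exact h2
  · exact h2.le

lemma detTrans_nonempty (M : FSA X T O) {q q' : Set X} {σ : O} (h : M.detTrans q σ q') :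
    q'.Nonempty := by
  rcases h with ⟨_, _, h3⟩ | ⟨h1, h2⟩
  · exact Set.nonempty_of_ncard_ne_zero (by omega)
  · subst h2; exact Set.nonempty_of_ncard_ne_zero (by omega)

/-- Build an observer run from an ℕ-indexed chain. -/
lemma chain_obsRun (M : FSA X T O) :
    ∀ (m : ℕ) (f : ℕ → Set X) (g : ℕ → O),
      (∀ j < m, M.obsTrans (f j) (g j) (f (j + 1))) →
      M.ObsRun (f 0) (List.ofFn fun i : Fin m => g i) (f m) := by
  intro m
  induction m with
  | zero => intro f g _; simp [FSA.ObsRun]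
  | succ m ih =>
    intro f g h
    rw [List.ofFn_succ]
    refine ⟨f 1, h 0 (by omega), ?_⟩
    have := ih (fun j => f (j + 1)) (fun j => g (j + 1)) (fun j hj => h (j + 1) (by omega))
    simpa [Fin.val_succ] using this

/-- Build a detector run from an ℕ-indexed chain. -/
lemma chain_detRun (M : FSA X T O) :
    ∀ (m : ℕ) (f : ℕ → Set X) (g : ℕ → O),
      (∀ j < m, M.detTrans (f j) (g j) (f (j + 1))) →
      M.DetRun (f 0) (List.ofFn fun i : Fin m => g i) (f m) := by
  intro m
  induction m with
  | zero => intro f g _; simp [FSA.DetRun]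
  | succ m ih =>
    intro f g h
    rw [List.ofFn_succ]
    refine ⟨f 1, h 0 (by omega), ?_⟩
    have := ih (fun j => f (j + 1)) (fun j => g (j + 1)) (fun j hj => h (j + 1) (by omega))
    simpa [Fin.val_succ] using this

/-- Extract an ℕ-indexed chain from an observer run. -/
lemma obsRun_chain (M : FSA X T O) :
    ∀ (w : List O) (q q' : Set X), M.ObsRun q w q' →
      ∃ f : ℕ → Set X, f 0 = q ∧ f w.length = q' ∧
        ∀ j (hj : j < w.length), M.obsTrans (f j) (w.get ⟨j, hj⟩) (f (j + 1)) := by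
  intro w
  induction w with
  | nil =>
    intro q q' h
    exact ⟨fun _ => q, rfl, h, fun j hj => absurd hj (by simp)⟩
  | cons σ w ih =>
    intro q q' h
    obtain ⟨q1, h1, h2⟩ := h
    obtain ⟨f, hf0, hfl, hft⟩ := ih q1 q' h2
    refine ⟨fun j => match j with | 0 => q | k + 1 => f k, rfl, hfl, ?_⟩
    intro j hj
    match j with
    | 0 => simpa [hf0] using h1
    | k + 1 => exact hft k (by simpa using hj)

/-- Extract an ℕ-indexed chain from a detector run. -/
lemma detRun_chain (M : FSA X T O) :
    ∀ (w : List O) (q q' : Set X), M.DetRun q w q' →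
      ∃ f : ℕ → Set X, f 0 = q ∧ f w.length = q' ∧
        ∀ j (hj : j < w.length), M.detTrans (f j) (w.get ⟨j, hj⟩) (f (j + 1)) := by
  intro w
  induction w with
  | nil =>
    intro q q' h
    exact ⟨fun _ => q, rfl, h, fun j hj => absurd hj (by simp)⟩
  | cons σ w ih =>
    intro q q' h
    obtain ⟨q1, h1, h2⟩ := h
    obtain ⟨f, hf0, hfl, hft⟩ := ih q1 q' h2
    refine ⟨fun j => match j with | 0 => q | k + 1 => f k, rfl, hfl, ?_⟩
    intro j hj
    match j with
    | 0 => simpa [hf0] using h1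
    | k + 1 => exact hft k (by simpa using hj)

/-- Unfold a cyclic `Fin`-indexed chain to a periodic ℕ-indexed chain. -/
lemma periodic_trans (R : Set X → O → Set X → Prop) {n : ℕ} (hn : 0 < n)
    (q : Fin (n + 1) → Set X) (σ : Fin n → O)
    (hc : q 0 = q (Fin.last n))
    (ht : ∀ i : Fin n, R (q i.castSucc) (σ i) (q i.succ)) (j : ℕ) :
    R (q ⟨j % n, lt_of_lt_of_le (Nat.mod_lt j hn) (Nat.le_succ n)⟩)
      (σ ⟨j % n, Nat.mod_lt j hn⟩)
      (q ⟨(j + 1) % n, lt_of_lt_of_le (Nat.mod_lt (j + 1) hn) (Nat.le_succ n)⟩) := by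
  set i : Fin n := ⟨j % n, Nat.mod_lt j hn⟩ with hi
  have h1 : (j + 1) % n = (j % n + 1) % n := (Nat.mod_add_mod j n 1).symm
  have e1 : (⟨j % n, lt_of_lt_of_le (Nat.mod_lt j hn) (Nat.le_succ n)⟩ : Fin (n + 1))
      = i.castSucc := by
    apply Fin.ext; simp [hi]
  rcases Nat.lt_or_ge (j % n + 1) n with h2 | h2
  · have e2 : (⟨(j + 1) % n, lt_of_lt_of_le (Nat.mod_lt (j + 1) hn) (Nat.le_succ n)⟩ :
        Fin (n + 1)) = i.succ := by
      apply Fin.ext; simp [h1, Nat.mod_eq_of_lt h2, hi]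
    rw [e1, e2]; exact ht i
  · have h3 : j % n + 1 = n := by have := Nat.mod_lt j hn; omega
    have e2 : (⟨(j + 1) % n, lt_of_lt_of_le (Nat.mod_lt (j + 1) hn) (Nat.le_succ n)⟩ :
        Fin (n + 1)) = (0 : Fin (n + 1)) := by
      apply Fin.ext; simp [h1, h3]
    have e3 : Fin.last n = i.succ := by apply Fin.ext; simp [hi, h3]
    rw [e1, e2, hc, e3]; exact ht i

end FSAAux

namespace FSAAux

variable {X T O : Type}

/-- Iterated observer steps. -/
def ochain (M : FSA X T O) (q0 : Set X) (g : ℕ → O) : ℕ → Set X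
  | 0 => q0
  | j + 1 => ostep M (g j) (ochain M q0 g j)

section Fin

variable [Fintype X]

/-- Backward step lemma for the detector. -/
lemma bw (M : FSA X T O) (σ : O) (Q p' : Set X)
    (hsub : p' ⊆ ostep M σ Q)
    (hinv : p'.ncard = 2 ∨ ((ostep M σ Q).ncard = 1 ∧ p' = ostep M σ Q)) :
    ∃ p, p ⊆ Q ∧ (p.ncard = 2 ∨ (Q.ncard = 1 ∧ p = Q)) ∧ M.detTrans p σ p' := by
  rcases hinv with h2 | ⟨h1, rfl⟩
  · obtain ⟨x', y', hxy, rfl⟩ := Set.ncard_eq_two.1 h2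
    have hx' : x' ∈ ostep M σ Q := hsub (by simp)
    have hy' : y' ∈ ostep M σ Q := hsub (by simp)
    obtain ⟨x, hxQ, hx⟩ := (mem_ostep M σ Q x').1 hx'
    obtain ⟨y, hyQ, hy⟩ := (mem_ostep M σ Q y').1 hy'
    by_cases hxy2 : x = y
    · subst hxy2
      by_cases hQ1 : Q.ncard = 1
      · obtain ⟨a, ha⟩ := Set.ncard_eq_one.1 hQ1
        have hxa : Q = {x} := by rw [ha] at hxQ ⊢; simp_all
        refine ⟨Q, le_refl _, Or.inr ⟨hQ1, rfl⟩, Or.inl ⟨?_, ?_, h2⟩⟩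
        · exact (Set.one_lt_ncard (Set.toFinite _)).2 ⟨x', hx', y', hy', hxy⟩
        · exact hsub
      · have hQ2 : 1 < Q.ncard := by
          have h0 : 0 < Q.ncard := (Set.ncard_pos (Set.toFinite _)).2 ⟨x, hxQ⟩
          omega
        obtain ⟨z, hzQ, hzx⟩ := Set.exists_ne_of_one_lt_ncard hQ2 x
        have hxsub : ({x} : Set X) ⊆ {x, z} := by simp
        have hxm : x' ∈ ostep M σ {x, z} := ostep_mono M σ hxsub hx
        have hym : y' ∈ ostep M σ {x, z} := ostep_mono M σ hxsub hy
        refine ⟨{x, z}, ?_, Or.inl (Set.ncard_pair (Ne.symm hzx)), Or.inl ⟨?_, ?_, h2⟩⟩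
        · intro a ha; rcases ha with rfl | rfl
          · exact hxQ
          · exact hzQ
        · exact (Set.one_lt_ncard (Set.toFinite _)).2 ⟨x', hxm, y', hym, hxy⟩
        · intro a ha; rcases ha with rfl | rfl
          · exact hxm
          · exact hym
    · have hxm : x' ∈ ostep M σ {x, y} := ostep_mono M σ (by simp) hx
      have hym : y' ∈ ostep M σ {x, y} :=
        ostep_mono M σ (by simp : ({y} : Set X) ⊆ {x, y}) hy
      refine ⟨{x, y}, ?_, Or.inl (Set.ncard_pair hxy2), Or.inl ⟨?_, ?_, h2⟩⟩
      · intro a ha; rcases ha with rfl | rfl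
        · exact hxQ
        · exact hyQ
      · exact (Set.one_lt_ncard (Set.toFinite _)).2 ⟨x', hxm, y', hym, hxy⟩
      · intro a ha; rcases ha with rfl | rfl
        · exact hxm
        · exact hym
  · -- singleton case
    obtain ⟨c, hc⟩ := Set.ncard_eq_one.1 h1
    have hcm : c ∈ ostep M σ Q := by rw [hc]; rfl
    obtain ⟨x, hxQ, hxc⟩ := (mem_ostep M σ Q c).1 hcm
    by_cases hQ1 : Q.ncard = 1
    · exact ⟨Q, le_refl _, Or.inr ⟨hQ1, rfl⟩, Or.inr ⟨h1, rfl⟩⟩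
    · have hQ2 : 1 < Q.ncard := by
        have h0 : 0 < Q.ncard := (Set.ncard_pos (Set.toFinite _)).2 ⟨x, hxQ⟩
        omega
      obtain ⟨z, hzQ, hzx⟩ := Set.exists_ne_of_one_lt_ncard hQ2 x
      have hpQ : ({x, z} : Set X) ⊆ Q := by
        intro a ha; rcases ha with rfl | rfl
        · exact hxQ
        · exact hzQ
      have heq : ostep M σ {x, z} = ostep M σ Q := by
        apply Set.Subset.antisymm (ostep_mono M σ hpQ)
        rw [hc]
        intro a ha
        have : a = c := ha
        subst this
        exact ostep_mono M σ (by simp : ({x} : Set X) ⊆ {x, z}) hxc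
      refine ⟨{x, z}, hpQ, Or.inl (Set.ncard_pair (Ne.symm hzx)), Or.inr ⟨?_, ?_⟩⟩
      · rw [show M.UR (M.ReachO σ {x, z}) = ostep M σ {x, z} from rfl, heq]; exact h1
      · rw [show M.UR (M.ReachO σ {x, z}) = ostep M σ {x, z} from rfl, heq]

/-- Backward chain construction for the detector. -/
lemma bw_chain (M : FSA X T O) (QQ : ℕ → Set X) (g : ℕ → O)
    (hQQ : ∀ j, QQ (j + 1) = ostep M (g j) (QQ j)) :
    ∀ (L : ℕ) (pL : Set X), pL ⊆ QQ L →
      (pL.ncard = 2 ∨ ((QQ L).ncard = 1 ∧ pL = QQ L)) →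
      ∃ P : ℕ → Set X, P L = pL ∧
        (∀ j ≤ L, P j ⊆ QQ j ∧ (( P j).ncard = 2 ∨ ((QQ j).ncard = 1 ∧ P j = QQ j))) ∧
        (∀ j < L, M.detTrans (P j) (g j) (P (j + 1))) := by
  intro L
  induction L with
  | zero =>
    intro pL h1 h2
    refine ⟨fun _ => pL, rfl, ?_, fun j hj => absurd hj (by omega)⟩
    intro j hj
    interval_cases j
    exact ⟨h1, h2⟩
  | succ L ih =>
    intro pL h1 h2
    have h1' : pL ⊆ ostep M (g L) (QQ L) := by rw [← hQQ L]; exact h1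
    have h2' : pL.ncard = 2 ∨ ((ostep M (g L) (QQ L)).ncard = 1 ∧ pL = ostep M (g L) (QQ L)) := by
      rw [← hQQ L]; exact h2
    obtain ⟨p, hpQ, hpinv, hdt⟩ := bw M (g L) (QQ L) pL h1' h2'
    obtain ⟨P, hPL, hPinv, hPdt⟩ := ih p hpQ hpinv
    refine ⟨fun j => if j = L + 1 then pL else P j, by simp, ?_, ?_⟩
    · intro j hj
      by_cases hjL : j = L + 1
      · subst hjL
        simp only [if_pos rfl]
        exact ⟨h1, h2⟩
      · have : j ≤ L := by omega
        simpa [hjL] using hPinv j this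
    · intro j hj
      by_cases hjL : j = L
      · subst hjL
        simpa [hPL, Nat.lt_irrefl] using hdt
      · have hj' : j < L := by omega
        have e1 : j ≠ L + 1 := by omega
        have e2 : j + 1 ≠ L + 1 := by omega
        simpa [e1, e2, hjL] using hPdt j hj'

omit [Fintype X] in
/-- Bounded pigeonhole on subsets of a finite type. -/
lemma pigeon [Finite X] (gg : ℕ → Set X) :
    ∃ a b : ℕ, a < b ∧ b ≤ Nat.card (Set X) ∧ gg a = gg b := by
  haveI := Fintype.ofFinite (Set X)
  obtain ⟨a, b, hab, hfe⟩ := Fintype.exists_ne_map_eq_of_card_lt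
    (fun k : Fin (Nat.card (Set X) + 1) => gg k)
    (by simp [Nat.card_eq_fintype_card])
  have hv : (a : ℕ) ≠ b := fun h => hab (Fin.ext h)
  rcases hv.lt_or_gt with h | h
  · exact ⟨a, b, h, Nat.lt_succ_iff.1 b.isLt, hfe⟩
  · exact ⟨b, a, h, Nat.lt_succ_iff.1 a.isLt, hfe.symm⟩

end Fin

end FSAAux

/-- The detector has a reachable transition cycle all of whose states
have cardinality 2 iff the observer has a reachable transition cycle in which no
state is a singleton. -/
theorem detector_cycle_iff_observer_cycle {X T O : Type} [Fintype X] [Fintype T] [Fintype O]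
    (M : FSA X T O) :
    (∃ (n : ℕ), 0 < n ∧ ∃ (q : Fin (n + 1) → Set X) (σ : Fin n → O),
        M.DetReachable (q 0) ∧ q 0 = q (Fin.last n) ∧
        (∀ i : Fin n, M.detTrans (q i.castSucc) (σ i) (q i.succ)) ∧
        ∀ i : Fin (n + 1), (q i).ncard = 2) ↔
    (∃ (n : ℕ), 0 < n ∧ ∃ (q : Fin (n + 1) → Set X) (σ : Fin n → O),
        M.ObsReachable (q 0) ∧ q 0 = q (Fin.last n) ∧
        (∀ i : Fin n, M.obsTrans (q i.castSucc) (σ i) (q i.succ)) ∧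
        ∀ i : Fin (n + 1), (q i).ncard ≠ 1) := by
  constructor
  · -- detector cycle → observer cycle
    rintro ⟨n, hn, q, σ, ⟨w, hw⟩, hclose, htrans, hcard⟩
    obtain ⟨d, hd0, hdm, hdtrans⟩ := FSAAux.detRun_chain M w M.obsInit (q 0) hw
    set m := w.length with hm
    set σi : ℕ → O := fun j => σ ⟨j % n, Nat.mod_lt j hn⟩ with hσi
    set qi : ℕ → Set X :=
      fun j => q ⟨j % n, lt_of_lt_of_le (Nat.mod_lt j hn) (Nat.le_succ n)⟩ with hqi
    have hdti : ∀ j, M.detTrans (qi j) (σi j) (qi (j + 1)) := fun j =>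
      FSAAux.periodic_trans M.detTrans hn q σ hclose htrans j
    have hqi2 : ∀ j, (qi j).ncard = 2 := fun j => hcard _
    have hqi0 : qi 0 = q 0 := by
      have e0 : (⟨0 % n, lt_of_lt_of_le (Nat.mod_lt 0 hn) (Nat.le_succ n)⟩ : Fin (n + 1)) = 0 := by
        apply Fin.ext; simp
      show q _ = q 0
      rw [e0]
    set g : ℕ → O := fun j => if h : j < m then w.get ⟨j, h⟩ else σi (j - m) with hg
    set D : ℕ → Set X := fun j => if j < m then d j else qi (j - m) with hD
    have hDd : ∀ k ≤ m, D k = d k := by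
      intro k hk
      by_cases h : k < m
      · simp [hD, h]
      · have hkm : k = m := by omega
        subst hkm
        simp only [hD, if_neg h, Nat.sub_self]
        exact hqi0.trans hdm.symm
    have hDm : ∀ j, D (m + j) = qi j := by
      intro j
      have h : ¬ (m + j < m) := by omega
      simp only [hD, if_neg h, Nat.add_sub_cancel_left]
    have hDtrans : ∀ j, M.detTrans (D j) (g j) (D (j + 1)) := by
      intro j
      by_cases hj : j < m
      · have e1 : D j = d j := hDd j (le_of_lt hj)
        have e2 : D (j + 1) = d (j + 1) := hDd (j + 1) hj
        have e3 : g j = w.get ⟨j, hj⟩ := dif_pos hj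
        rw [e1, e2, e3]
        exact hdtrans j hj
      · have hjm : m ≤ j := by omega
        have e1 : D j = qi (j - m) := by simp only [hD, if_neg hj]
        have e2 : D (j + 1) = qi (j - m + 1) := by
          have h' : ¬ (j + 1 < m) := by omega
          have h'' : j + 1 - m = (j - m) + 1 := by omega
          simp only [hD, if_neg h', h'']
        have e3 : g j = σi (j - m) := dif_neg hj
        rw [e1, e2, e3]
        exact hdti (j - m)
    set F : ℕ → Set X := fun j => FSAAux.ochain M M.obsInit g j with hF
    have hF0 : F 0 = M.obsInit := rfl
    have hFs : ∀ j, F (j + 1) = FSAAux.ostep M (g j) (F j) := fun j => rfl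
    have hDF : ∀ j, D j ⊆ F j := by
      intro j
      induction j with
      | zero =>
        rw [hDd 0 (Nat.zero_le m), hd0, hF0]
      | succ j ih =>
        calc D (j + 1) ⊆ FSAAux.ostep M (g j) (D j) := FSAAux.detTrans_sub M (hDtrans j)
          _ ⊆ FSAAux.ostep M (g j) (F j) := FSAAux.ostep_mono M _ ih
          _ = F (j + 1) := (hFs j).symm
    have hFtrans : ∀ j, M.obsTrans (F j) (g j) (F (j + 1)) := by
      intro j
      exact ⟨hFs j, (FSAAux.detTrans_nonempty M (hDtrans j)).mono (hDF (j + 1))⟩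
    have hFcard : ∀ j, 2 ≤ (F (m + j)).ncard := by
      intro j
      have hsub : qi j ⊆ F (m + j) := hDm j ▸ hDF (m + j)
      calc 2 = (qi j).ncard := (hqi2 j).symm
        _ ≤ (F (m + j)).ncard := Set.ncard_le_ncard hsub (Set.toFinite _)
    obtain ⟨a, b, hab, hbC, hfe⟩ := FSAAux.pigeon (fun k => F (m + k * n))
    have hfe' : F (m + a * n) = F (m + b * n) := hfe
    have hkey : m + a * n + (b - a) * n = m + b * n := by
      have : a * n + (b - a) * n = b * n := by rw [← Nat.add_mul]; congr 1; omega
      omega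
    refine ⟨(b - a) * n, Nat.mul_pos (by omega) hn,
      fun i => F (m + a * n + i), fun i => g (m + a * n + i), ?_, ?_, ?_, ?_⟩
    · refine ⟨List.ofFn fun i : Fin (m + a * n) => g i, ?_⟩
      have hrun := FSAAux.chain_obsRun M (m + a * n) F g (fun j _ => hFtrans j)
      simp only [Fin.val_zero, add_zero]
      exact hrun
    · show F (m + a * n + ((0 : Fin ((b - a) * n + 1)) : ℕ))
        = F (m + a * n + ((Fin.last ((b - a) * n) : Fin ((b - a) * n + 1)) : ℕ))
      simp only [Fin.val_zero, Fin.val_last, add_zero]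
      rw [hkey]
      exact hfe'
    · intro i
      simp only [Fin.coe_castSucc, Fin.val_succ]
      rw [show m + a * n + ((i : ℕ) + 1) = (m + a * n + (i : ℕ)) + 1 from by omega]
      exact hFtrans (m + a * n + (i : ℕ))
    · intro i
      show (F (m + a * n + (i : ℕ))).ncard ≠ 1
      have h2 := hFcard (a * n + (i : ℕ))
      rw [← Nat.add_assoc] at h2
      omega
  · -- observer cycle → detector cycle
    rintro ⟨n, hn, Q, σ, ⟨w, hw⟩, hclose, htrans, hcard⟩
    have hne : ∀ i, (Q i).Nonempty := by
      intro i
      induction i using Fin.cases with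
      | zero =>
        have h := (htrans ⟨n - 1, by omega⟩).2
        have e : (⟨n - 1, by omega⟩ : Fin n).succ = Fin.last n := by
          apply Fin.ext; simp [Fin.val_succ]; omega
        rw [hclose, ← e]
        exact h
      | succ j => exact (htrans j).2
    have hcard2 : ∀ i, 2 ≤ (Q i).ncard := by
      intro i
      have h0 : 0 < (Q i).ncard := (Set.ncard_pos (Set.toFinite _)).2 (hne i)
      have := hcard i; omega
    obtain ⟨f, hf0, hfm, hftrans⟩ := FSAAux.obsRun_chain M w M.obsInit (Q 0) hw
    set m := w.length with hm
    set σi : ℕ → O := fun j => σ ⟨j % n, Nat.mod_lt j hn⟩ with hσi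
    set qi : ℕ → Set X :=
      fun j => Q ⟨j % n, lt_of_lt_of_le (Nat.mod_lt j hn) (Nat.le_succ n)⟩ with hqi
    have hoti : ∀ j, M.obsTrans (qi j) (σi j) (qi (j + 1)) := fun j =>
      FSAAux.periodic_trans M.obsTrans hn Q σ hclose htrans j
    have hqic : ∀ j, 2 ≤ (qi j).ncard := fun j => hcard2 _
    have hqi0 : qi 0 = Q 0 := by
      have e0 : (⟨0 % n, lt_of_lt_of_le (Nat.mod_lt 0 hn) (Nat.le_succ n)⟩ : Fin (n + 1)) = 0 := by
        apply Fin.ext; simp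
      show Q _ = Q 0
      rw [e0]
    set g : ℕ → O := fun j => if h : j < m then w.get ⟨j, h⟩ else σi (j - m) with hg
    set QQ : ℕ → Set X := fun j => FSAAux.ochain M M.obsInit g j with hQQdef
    have hQQs : ∀ j, QQ (j + 1) = FSAAux.ostep M (g j) (QQ j) := fun j => rfl
    have hQm : QQ m = Q 0 := by
      have key : ∀ j, j ≤ m → QQ j = f j := by
        intro j
        induction j with
        | zero => intro _; rw [hf0]; rfl
        | succ j ih =>
          intro hj
          have hjm : j < m := by omega
          have e : g j = w.get ⟨j, hjm⟩ := dif_pos hjm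
          calc QQ (j + 1) = FSAAux.ostep M (g j) (QQ j) := rfl
            _ = FSAAux.ostep M (w.get ⟨j, hjm⟩) (f j) := by rw [e, ih (le_of_lt hjm)]
            _ = f (j + 1) := ((hftrans j hjm).1).symm
      exact (key m le_rfl).trans hfm
    have hQQi : ∀ j, QQ (m + j) = qi j := by
      intro j
      induction j with
      | zero => rw [Nat.add_zero, hQm, ← hqi0]
      | succ j ih =>
        have h : ¬ (m + j < m) := by omega
        have e3 : g (m + j) = σi j := by
          rw [hg]; simp only [dif_neg h, Nat.add_sub_cancel_left]
        calc QQ (m + (j + 1)) = FSAAux.ostep M (g (m + j)) (QQ (m + j)) := rfl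
          _ = FSAAux.ostep M (σi j) (qi j) := by rw [e3, ih]
          _ = qi (j + 1) := ((hoti j).1).symm
    set C := Nat.card (Set X) with hC
    set L := m + (C + 1) * n with hL
    have hQL : 2 ≤ (QQ L).ncard := by
      rw [hL, hQQi]
      exact hqic _
    obtain ⟨pL, hpsub, hp2⟩ := Set.exists_subset_card_eq hQL
    obtain ⟨P, hPL, hPinv, hPdt⟩ :=
      FSAAux.bw_chain M QQ g (fun j => rfl) L pL hpsub (Or.inl hp2)
    obtain ⟨a, b, hab, hbC, hfe⟩ := FSAAux.pigeon (fun k => P (m + (k + 1) * n))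
    have hfe' : P (m + (a + 1) * n) = P (m + (b + 1) * n) := hfe
    set s := m + (a + 1) * n with hs
    set N := (b - a) * n with hN
    have hN0 : 0 < N := Nat.mul_pos (by omega) hn
    have hkey : s + N = m + (b + 1) * n := by
      rw [hs, hN]
      have : (a + 1) * n + (b - a) * n = (b + 1) * n := by
        rw [← Nat.add_mul]; congr 1; omega
      omega
    have hsNL : s + N ≤ L := by
      rw [hkey, hL]
      have : (b + 1) * n ≤ (C + 1) * n := Nat.mul_le_mul_right _ (by omega)
      omega
    have hs1 : 1 ≤ s := by
      have := Nat.mul_pos (show 0 < a + 1 by omega) hn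
      omega
    have hL1 : 1 ≤ L := by omega
    refine ⟨N, hN0, fun i => P (s + i), fun i => g (s + i), ?_, ?_, ?_, ?_⟩
    · -- DetReachable (P s)
      set D : ℕ → Set X := fun j => if j = 0 then M.obsInit else P j with hD
      have hDtr : ∀ j < s, M.detTrans (D j) (g j) (D (j + 1)) := by
        intro j hj
        by_cases hj0 : j = 0
        · subst hj0
          have e1 : D 0 = M.obsInit := rfl
          have e2 : D 1 = P 1 := by simp [hD]
          rw [e1, e2]
          have hinv1 := hPinv 1 hL1
          have hsub1 : P 1 ⊆ QQ 1 := hinv1.1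
          rcases hinv1.2 with h2 | ⟨h1, heq⟩
          · left
            refine ⟨?_, hsub1, h2⟩
            show 1 < (QQ 1).ncard
            have := Set.ncard_le_ncard hsub1 (Set.toFinite _)
            omega
          · right
            exact ⟨h1, heq⟩
        · have e1 : D j = P j := by rw [hD]; simp [hj0]
          have e2 : D (j + 1) = P (j + 1) := by simp [hD]
          rw [e1, e2]
          exact hPdt j (by omega)
      have hrun := FSAAux.chain_detRun M s D g hDtr
      have eDs : D s = P s := by simp [hD, show s ≠ 0 by omega]
      refine ⟨List.ofFn fun i : Fin s => g i, ?_⟩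
      simp only [Fin.val_zero, add_zero]
      rw [← eDs]
      exact hrun
    · show P (s + ((0 : Fin (N + 1)) : ℕ)) = P (s + ((Fin.last N : Fin (N + 1)) : ℕ))
      simp only [Fin.val_zero, Fin.val_last, add_zero]
      rw [hkey, hs]
      exact hfe'
    · intro i
      simp only [Fin.coe_castSucc, Fin.val_succ]
      rw [show s + ((i : ℕ) + 1) = (s + (i : ℕ)) + 1 from by omega]
      refine hPdt (s + (i : ℕ)) ?_
      have : (i : ℕ) < N := i.isLt
      omega
    · intro i
      show (P (s + (i : ℕ))).ncard = 2
      have hiN : (i : ℕ) ≤ N := by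
        have := i.isLt; omega
      have hinv := hPinv (s + (i : ℕ)) (by omega)
      rcases hinv.2 with h2 | ⟨h1, heq⟩
      · exact h2
      · exfalso
        have e : s + (i : ℕ) = m + ((a + 1) * n + (i : ℕ)) := by
          rw [hs, Nat.add_assoc]
        rw [e, hQQi] at h1
        have := hqic ((a + 1) * n + (i : ℕ))
        omega
end
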